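/- arXiv:1507.07500 — 3 statements merged into one kernel-verified Lean document; each statement's English description precedes it below -/
import Mathlib

section
/- Let λ > 0 be a real damping parameter and let f : ℝ → ℝ satisfy: (i) f belongs to the Newton class; (ii) the limits of f at +∞ and −∞ are infinite and of opposite signs; (iii) f has at least four real roots. Then the damped modified Newton approximation function M_{λ,f} has periodic points of every prime period: for every n ∈ ℕ there exists a ∈ ℝ with M_{λ,f}ⁿ(a) = a and M_{λ,f}ᵐ(a) ≠ a for all 1 ≤ m < n. -/
/-- `f` belongs to the Newton class: `f` is twice continuously differentiable,
roots of `f` are simple, and roots of `f'` are simple. -/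
def NewtonClass (f : ℝ → ℝ) : Prop :=
  ContDiff ℝ 2 f ∧ (∀ x, f x = 0 → deriv f x ≠ 0) ∧
    (∀ x, deriv f x = 0 → deriv (deriv f) x ≠ 0)

/-- The damped Newton approximation function `N_{λ,f}(x) = x - λ·f(x)/f'(x)`. -/
noncomputable def dampedNewtonFun (lam : ℝ) (f : ℝ → ℝ) (x : ℝ) : ℝ :=
  x - lam * (f x / deriv f x)

/-- The damped modified Newton approximation function
`M_{λ,f}(x) = N_{λ,f}(x) - λ·f(N_{λ,f}(x))/f'(x)`. -/
noncomputable def dampedModNewtonFun (lam : ℝ) (f : ℝ → ℝ) (x : ℝ) : ℝ :=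
  dampedNewtonFun lam f x - lam * (f (dampedNewtonFun lam f x) / deriv f x)

open Set Filter Topology

/-- Given a continuous map on `[p,q]` attaining values `c ≤ d` at `x ≤ y`,
there is a subinterval mapped exactly onto `[c,d]`. -/
lemma exists_onto_subinterval_aux (g : ℝ → ℝ) {p q x y c d : ℝ}
    (hg : ContinuousOn g (Icc p q)) (hx : x ∈ Icc p q) (hy : y ∈ Icc p q)
    (hxy : x ≤ y) (hgx : g x = c) (hgy : g y = d) (hcd : c ≤ d) :
    ∃ s t, s ≤ t ∧ Icc s t ⊆ Icc p q ∧ g '' Icc s t = Icc c d := by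
  have hxyIcc : Icc x y ⊆ Icc p q := Icc_subset_Icc hx.1 hy.2
  have hSclosed : IsClosed {z ∈ Icc x y | g z = c} := by
    have : {z ∈ Icc x y | g z = c} = Icc x y ∩ g ⁻¹' {c} := by ext z; simp [and_comm]
    rw [this]
    exact (hg.mono hxyIcc).preimage_isClosed_of_isClosed isClosed_Icc isClosed_singleton
  have hSne : x ∈ {z ∈ Icc x y | g z = c} := ⟨⟨le_rfl, hxy⟩, hgx⟩
  have hSbdd : BddAbove {z ∈ Icc x y | g z = c} :=
    (bddAbove_Icc (a := x) (b := y)).mono (fun z hz => hz.1)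
  set s := sSup {z ∈ Icc x y | g z = c} with hs_def
  have hs_mem : s ∈ {z ∈ Icc x y | g z = c} := hSclosed.csSup_mem ⟨x, hSne⟩ hSbdd
  have hgs : g s = c := hs_mem.2
  have hsxy : s ∈ Icc x y := hs_mem.1
  have hs_ub : ∀ z ∈ Icc x y, g z = c → z ≤ s := fun z hz hgz => le_csSup hSbdd ⟨hz, hgz⟩
  -- now T
  have hTclosed : IsClosed {z ∈ Icc s y | g z = d} := by
    have : {z ∈ Icc s y | g z = d} = Icc s y ∩ g ⁻¹' {d} := by ext z; simp [and_comm]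
    rw [this]
    refine (hg.mono ?_).preimage_isClosed_of_isClosed isClosed_Icc isClosed_singleton
    exact Icc_subset_Icc (hx.1.trans hsxy.1) hy.2
  have hTne : y ∈ {z ∈ Icc s y | g z = d} := ⟨⟨hsxy.2, le_rfl⟩, hgy⟩
  have hTbdd : BddBelow {z ∈ Icc s y | g z = d} :=
    (bddBelow_Icc (a := y) (b := s)).mono (fun z hz => hz.1)
  set t := sInf {z ∈ Icc s y | g z = d} with ht_def
  have ht_mem : t ∈ {z ∈ Icc s y | g z = d} := hTclosed.csInf_mem ⟨y, hTne⟩ hTbdd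
  have hgt : g t = d := ht_mem.2
  have hst : s ≤ t := ht_mem.1.1
  have hty : t ≤ y := ht_mem.1.2
  have ht_lb : ∀ z ∈ Icc s y, g z = d → t ≤ z := fun z hz hgz => csInf_le hTbdd ⟨hz, hgz⟩
  have hsub : Icc s t ⊆ Icc p q := Icc_subset_Icc (hx.1.trans hsxy.1) (hty.trans hy.2)
  refine ⟨s, t, hst, hsub, ?_⟩
  apply Subset.antisymm
  · rintro _ ⟨z, hz, rfl⟩
    constructor
    · by_contra h
      push_neg at h
      -- g z < c : find another point of value c above s
      have hzy : z ≤ y := hz.2.trans hty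
      have : c ∈ Icc (g z) (g y) := ⟨h.le, hgy ▸ hcd⟩
      have hiv := intermediate_value_Icc hzy (hg.mono (Icc_subset_Icc
        (hx.1.trans (hsxy.1.trans hz.1)) hy.2)) this
      obtain ⟨w, hw, hgw⟩ := hiv
      have hws : w ≤ s := hs_ub w ⟨(hsxy.1.trans hz.1).trans hw.1, hw.2⟩ hgw
      have hzs : s < z := by
        rcases eq_or_lt_of_le hz.1 with h' | h'
        · rw [← h'] at h; exact absurd hgs h.ne
        · exact h'
      exact absurd (hw.1.trans hws) (not_le.mpr hzs)
    · by_contra h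
      push_neg at h
      -- g z > d : find value d below t
      have : d ∈ Icc (g s) (g z) := ⟨hgs ▸ hcd, h.le⟩
      have hiv := intermediate_value_Icc hz.1 (hg.mono (Icc_subset_Icc
        (hx.1.trans hsxy.1) ((hz.2.trans hty).trans hy.2))) this
      obtain ⟨w, hw, hgw⟩ := hiv
      have htw : t ≤ w := ht_lb w ⟨hw.1, hw.2.trans (hz.2.trans hty)⟩ hgw
      have hwt : w ≤ t := hw.2.trans hz.2
      have : z ≤ t := hz.2
      have hzt : z = t := le_antisymm hz.2 (htw.trans hw.2)
      exact absurd (hzt ▸ hgt) h.ne'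
  · have := intermediate_value_Icc hst (hg.mono hsub)
    rw [hgs, hgt] at this
    exact this

/-- general version: no order assumption on the points. -/
lemma exists_onto_subinterval (g : ℝ → ℝ) {p q x y c d : ℝ}
    (hg : ContinuousOn g (Icc p q)) (hx : x ∈ Icc p q) (hy : y ∈ Icc p q)
    (hgx : g x = c) (hgy : g y = d) (hcd : c ≤ d) :
    ∃ s t, s ≤ t ∧ Icc s t ⊆ Icc p q ∧ g '' Icc s t = Icc c d := by
  rcases le_total x y with hxy | hyx
  · exact exists_onto_subinterval_aux g hg hx hy hxy hgx hgy hcd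
  · -- reflect
    set r : ℝ → ℝ := fun z => p + q - z with hr
    have hrmap : ∀ z, z ∈ Icc p q → r z ∈ Icc p q := by
      intro z hz
      constructor <;> simp only [hr] <;> linarith [hz.1, hz.2]
    have hgr : ContinuousOn (g ∘ r) (Icc p q) :=
      hg.comp ((continuous_const.sub continuous_id).continuousOn) hrmap
    have hrr : ∀ z, r (r z) = z := by intro z; simp only [hr]; ring
    obtain ⟨s, t, hst, hsub, him⟩ := exists_onto_subinterval_aux (g ∘ r) hgr
      (hrmap x hx) (hrmap y hy) (by simp only [hr]; linarith)
      (by simp only [Function.comp]; rw [hrr, hgx])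
      (by simp only [Function.comp]; rw [hrr, hgy]) hcd
    refine ⟨p + q - t, p + q - s, by linarith, ?_, ?_⟩
    · intro z hz
      have h1 : p ≤ s := (hsub ⟨le_rfl, hst⟩).1
      have h2 : t ≤ q := (hsub ⟨hst, le_rfl⟩).2
      exact ⟨by linarith [hz.1], by linarith [hz.2]⟩
    · have : g '' Icc (p + q - t) (p + q - s) = (g ∘ r) '' Icc s t := by
        rw [Set.image_comp]
        have : r '' Icc s t = Icc (p + q - t) (p + q - s) := by
          simp only [hr]
          exact Set.image_const_sub_Icc _ _ _
        rw [this]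
      rw [this, him]

/-- Horseshoe lemma: two disjoint compact intervals, each mapped over `[a,d]`,
produce periodic points of every exact period `n ≥ 2`. -/
lemma horseshoe_periodic (g : ℝ → ℝ) {a u v d : ℝ}
    (hau : a ≤ u) (huv : u < v) (hvd : v ≤ d)
    (hgA : ContinuousOn g (Icc a u)) (hgB : ContinuousOn g (Icc v d))
    (hA : Icc a d ⊆ g '' Icc a u) (hB : Icc a d ⊆ g '' Icc v d)
    (n : ℕ) (hn : 2 ≤ n) :
    ∃ x, g^[n] x = x ∧ ∀ m, 1 ≤ m → m < n → g^[m] x ≠ x := by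
  have had : a ≤ d := hau.trans (huv.le.trans hvd)
  have hav : a ≤ v := hau.trans huv.le
  have hud : u ≤ d := huv.le.trans hvd
  have hAsub : Icc a u ⊆ Icc a d := Icc_subset_Icc le_rfl hud
  have hBsub : Icc v d ⊆ Icc a d := Icc_subset_Icc hav le_rfl
  -- covering step into B
  have coverB : ∀ s t : ℝ, s ≤ t → Icc s t ⊆ Icc a d →
      ∃ s' t', s' ≤ t' ∧ Icc s' t' ⊆ Icc v d ∧ g '' Icc s' t' = Icc s t := by
    intro s t hst hsub
    obtain ⟨xs, hxs, hgxs⟩ := hB (hsub ⟨le_rfl, hst⟩)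
    obtain ⟨xt, hxt, hgxt⟩ := hB (hsub ⟨hst, le_rfl⟩)
    exact exists_onto_subinterval g hgB hxs hxt hgxs hgxt hst
  have coverA : ∀ s t : ℝ, s ≤ t → Icc s t ⊆ Icc a d →
      ∃ s' t', s' ≤ t' ∧ Icc s' t' ⊆ Icc a u ∧ g '' Icc s' t' = Icc s t := by
    intro s t hst hsub
    obtain ⟨xs, hxs, hgxs⟩ := hA (hsub ⟨le_rfl, hst⟩)
    obtain ⟨xt, hxt, hgxt⟩ := hA (hsub ⟨hst, le_rfl⟩)
    exact exists_onto_subinterval g hgA hxs hxt hgxs hgxt hst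
  -- backward induction: subinterval of B whose orbit stays in B for k steps then image is A
  have key : ∀ k : ℕ, 1 ≤ k → ∃ s t : ℝ, s ≤ t ∧ Icc s t ⊆ Icc v d ∧
      (∀ z ∈ Icc s t, ∀ i : ℕ, i < k → g^[i] z ∈ Icc v d) ∧
      g^[k] '' Icc s t = Icc a u := by
    intro k hk
    induction k with
    | zero => omega
    | succ k ih =>
      rcases Nat.lt_or_ge k 1 with hk1 | hk1
      · -- k = 0 : base case
        have hk0 : k = 0 := by omega
        subst hk0
        obtain ⟨s, t, hst, hsub, him⟩ := coverB a u hau hAsub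
        refine ⟨s, t, hst, hsub, ?_, ?_⟩
        · intro z hz i hi
          have : i = 0 := by omega
          subst this
          exact hsub hz
        · simpa using him
      · obtain ⟨s, t, hst, hsub, horb, him⟩ := ih hk1
        obtain ⟨s', t', hst', hsub', him'⟩ := coverB s t hst (hsub.trans hBsub)
        refine ⟨s', t', hst', hsub', ?_, ?_⟩
        · intro z hz i hi
          cases i with
          | zero => exact hsub' hz
          | succ j =>
            rw [Function.iterate_succ_apply]
            have hgz : g z ∈ Icc s t := him' ▸ ⟨z, hz, rfl⟩
            exact horb _ hgz j (by omega)
        · have : g^[k+1] '' Icc s' t' = g^[k] '' (g '' Icc s' t') := by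
            rw [← Set.image_comp]
            rfl
          rw [this, him', him]
  obtain ⟨k, hk2, rfl⟩ : ∃ k, 1 ≤ k ∧ n = k + 1 := ⟨n-1, by omega, by omega⟩
  obtain ⟨s, t, hst, hsubB, horb, him⟩ := key k hk2
  -- one more covering from A
  obtain ⟨s', t', hst', hsubA, him'⟩ := coverA s t hst (hsubB.trans hBsub)
  set J := Icc s' t' with hJ
  -- orbit facts on J
  have horbJ : ∀ z ∈ J, ∀ i : ℕ, 1 ≤ i → i < k + 1 → g^[i] z ∈ Icc v d := by
    intro z hz i hi1 hin
    obtain ⟨j, rfl⟩ : ∃ j, i = j + 1 := ⟨i - 1, by omega⟩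
    rw [Function.iterate_succ_apply]
    have hgz : g z ∈ Icc s t := him' ▸ ⟨z, hz, rfl⟩
    exact horb _ hgz j (by omega)
  -- continuity of iterates on Icc s t
  have contQ : ∀ j : ℕ, j ≤ k → ContinuousOn (g^[j]) (Icc s t) := by
    intro j
    induction j with
    | zero => intro _; simpa using continuousOn_id
    | succ j ih =>
      intro hj
      have h1 : ContinuousOn (g^[j]) (Icc s t) := ih (by omega)
      have h2 : ∀ z ∈ Icc s t, g^[j] z ∈ Icc v d := by
        intro z hz
        cases Nat.eq_zero_or_pos j with
        | inl h => subst h; simpa using hsubB hz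
        | inr h => exact horb z hz j (by omega)
      rw [Function.iterate_succ']
      exact hgB.comp h1 h2
  have hcontJ : ContinuousOn (g^[k+1]) J := by
    have h1 : ContinuousOn g J := hgA.mono hsubA
    have h2 : ∀ z ∈ J, g z ∈ Icc s t := fun z hz => him' ▸ ⟨z, hz, rfl⟩
    have h3 : ContinuousOn (g^[k] ∘ g) J := (contQ k le_rfl).comp h1 h2
    rw [Function.iterate_succ]
    exact h3
  -- image of J under g^[k+1]
  have himJ : g^[k+1] '' J = Icc a u := by
    rw [Function.iterate_succ, Set.image_comp, him', him]
  -- fixed point of g^[n] in J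
  have hJA : J ⊆ Icc a u := hsubA
  obtain ⟨x₁, hx₁, hgx₁⟩ : ∃ x₁ ∈ J, g^[k+1] x₁ = a := by
    have : a ∈ Icc a u := ⟨le_rfl, hau⟩
    rw [← himJ] at this
    obtain ⟨x₁, h1, h2⟩ := this
    exact ⟨x₁, h1, h2⟩
  obtain ⟨x₂, hx₂, hgx₂⟩ : ∃ x₂ ∈ J, g^[k+1] x₂ = u := by
    have : u ∈ Icc a u := ⟨hau, le_rfl⟩
    rw [← himJ] at this
    obtain ⟨x₂, h1, h2⟩ := this
    exact ⟨x₂, h1, h2⟩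
  have hφcont : ContinuousOn (fun z => g^[k+1] z - z) J :=
    hcontJ.sub continuousOn_id
  have huIcc : uIcc x₁ x₂ ⊆ J := by
    rw [uIcc_eq_union]
    apply Set.union_subset <;> apply Icc_subset_Icc
    · exact hx₁.1
    · exact hx₂.2
    · exact hx₂.1
    · exact hx₁.2
  have h0mem : (0:ℝ) ∈ uIcc ((fun z => g^[k+1] z - z) x₁) ((fun z => g^[k+1] z - z) x₂) := by
    simp only [hgx₁, hgx₂]
    rw [Set.mem_uIcc]
    left
    constructor
    · linarith [(hJA hx₁).1]
    · linarith [(hJA hx₂).2]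
  obtain ⟨x, hxmem, hxfix⟩ := intermediate_value_uIcc (hφcont.mono huIcc) h0mem
  have hxJ : x ∈ J := huIcc hxmem
  have hfix : g^[k+1] x = x := by simpa [sub_eq_zero] using hxfix
  refine ⟨x, hfix, ?_⟩
  intro m hm1 hmn
  have h1 : g^[m] x ∈ Icc v d := horbJ x hxJ m hm1 hmn
  have h2 : x ∈ Icc a u := hJA hxJ
  intro heq
  have : v ≤ x := heq ▸ h1.1
  linarith [h2.2]


section Analytic

variable {lam : ℝ} {f : ℝ → ℝ}

lemma NewtonClass.contf (hf : NewtonClass f) : Continuous f := hf.1.continuous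

lemma NewtonClass.contf' (hf : NewtonClass f) : Continuous (deriv f) :=
  hf.1.continuous_deriv one_le_two

/-- roots are fixed points of the modified Newton map -/
lemma M_fixed_of_root {r : ℝ} (hr : f r = 0) :
    dampedModNewtonFun lam f r = r := by
  have hN : dampedNewtonFun lam f r = r := by
    simp [dampedNewtonFun, hr]
  simp [dampedModNewtonFun, hN, hr]

/-- Algebraic form used for limit computations. -/
lemma M_eq {x : ℝ} (hx : deriv f x ≠ 0) :
    dampedModNewtonFun lam f x =
      x - (lam * (deriv f x)⁻¹) * (f x + f (dampedNewtonFun lam f x)) := by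
  have hN : dampedNewtonFun lam f x = x - lam * (f x / deriv f x) := rfl
  rw [dampedModNewtonFun]
  set B := f (dampedNewtonFun lam f x) with hB
  rw [hN]
  field_simp
  ring

/-- `M` is continuous on any set avoiding critical points of `f`. -/
lemma M_contOn (hf : NewtonClass f) {s : Set ℝ} (hs : ∀ x ∈ s, deriv f x ≠ 0) :
    ContinuousOn (dampedModNewtonFun lam f) s := by
  have hN : ContinuousOn (dampedNewtonFun lam f) s := by
    apply (continuousOn_id).sub
    exact continuousOn_const.mul ((hf.contf.continuousOn).div hf.contf'.continuousOn hs)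
  apply hN.sub
  apply continuousOn_const.mul
  exact ((hf.contf.comp_continuousOn hN).div hf.contf'.continuousOn hs)

/-- At a simple root, points near `r` (other than `r`) are not roots. -/
lemma eventually_ne_root (hf : NewtonClass f) {r : ℝ} (hr : f r = 0) :
    ∀ᶠ x in 𝓝[≠] r, f x ≠ 0 := by
  have hd : HasDerivAt f (deriv f r) r :=
    ((hf.1.differentiable two_ne_zero) r).hasDerivAt
  have hslope : Tendsto (slope f r) (𝓝[≠] r) (𝓝 (deriv f r)) :=
    hasDerivAt_iff_tendsto_slope.mp hd
  have hne := hf.2.1 r hr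
  filter_upwards [hslope.eventually_ne hne, self_mem_nhdsWithin] with x hx hx'
  intro hfx
  apply hx
  rw [slope_def_field, hfx, hr, sub_zero, zero_div]

lemma deriv_pos_of_pos_right (hf : NewtonClass f) {a b : ℝ} (hab : a < b)
    (ha : f a = 0) (hpos : ∀ x ∈ Ioo a b, 0 < f x) : 0 < deriv f a := by
  have hd : HasDerivAt f (deriv f a) a :=
    ((hf.1.differentiable two_ne_zero) a).hasDerivAt
  have hslope : Tendsto (slope f a) (𝓝[≠] a) (𝓝 (deriv f a)) :=
    hasDerivAt_iff_tendsto_slope.mp hd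
  have hslope' : Tendsto (slope f a) (𝓝[>] a) (𝓝 (deriv f a)) :=
    hslope.mono_left (nhdsWithin_mono a (fun x hx => ne_of_gt hx))
  have hev : ∀ᶠ x in 𝓝[>] a, 0 ≤ slope f a x := by
    filter_upwards [Ioo_mem_nhdsGT_of_mem (⟨le_rfl, hab⟩ : a ∈ Ico a b)] with x hx
    rw [slope_def_field, ha, sub_zero]
    exact div_nonneg (hpos x hx).le (by linarith [hx.1])
  have h0 : 0 ≤ deriv f a := ge_of_tendsto hslope' hev
  exact h0.lt_of_ne' (hf.2.1 a ha)

lemma deriv_pos_of_neg_left (hf : NewtonClass f) {b d : ℝ} (hbd : b < d)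
    (hd0 : f d = 0) (hneg : ∀ x ∈ Ioo b d, f x < 0) : 0 < deriv f d := by
  have hd : HasDerivAt f (deriv f d) d :=
    ((hf.1.differentiable two_ne_zero) d).hasDerivAt
  have hslope : Tendsto (slope f d) (𝓝[≠] d) (𝓝 (deriv f d)) :=
    hasDerivAt_iff_tendsto_slope.mp hd
  have hslope' : Tendsto (slope f d) (𝓝[<] d) (𝓝 (deriv f d)) :=
    hslope.mono_left (nhdsWithin_mono d (fun x hx => ne_of_lt hx))
  have hev : ∀ᶠ x in 𝓝[<] d, 0 ≤ slope f d x := by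
    filter_upwards [Ioo_mem_nhdsLT_of_mem (⟨hbd, le_rfl⟩ : d ∈ Ioc b d)] with x hx
    rw [slope_def_field, hd0, sub_zero]
    rw [div_nonneg_iff]
    right
    exact ⟨(hneg x hx).le, by linarith [hx.2]⟩
  have h0 : 0 ≤ deriv f d := ge_of_tendsto hslope' hev
  exact h0.lt_of_ne' (hf.2.1 d hd0)

/-- `M → +∞` to the left of a critical point on a positive hump. -/
lemma tendsto_M_atTop (hlam : 0 < lam) (hf : NewtonClass f)
    (hbot : Tendsto f atBot atBot) {c : ℝ} (hfc : 0 < f c) (hdc : deriv f c = 0)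
    (hev : ∀ᶠ x in 𝓝[<] c, 0 < deriv f x) :
    Tendsto (dampedModNewtonFun lam f) (𝓝[<] c) atTop := by
  set l := 𝓝[<] c with hl
  have h1 : Tendsto (deriv f) l (𝓝 0) := by
    have := (hf.contf'.tendsto c).mono_left (nhdsWithin_le_nhds (s := Iio c))
    rwa [hdc] at this
  have h1' : Tendsto (deriv f) l (𝓝[>] 0) :=
    tendsto_nhdsWithin_iff.mpr ⟨h1, hev⟩
  have h2 : Tendsto (fun x => (deriv f x)⁻¹) l atTop := tendsto_inv_nhdsGT_zero.comp h1'
  have h3 : Tendsto f l (𝓝 (f c)) := (hf.contf.tendsto c).mono_left nhdsWithin_le_nhds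
  have h4 : Tendsto (fun x => lam * (f x * (deriv f x)⁻¹)) l atTop :=
    (Filter.Tendsto.pos_mul_atTop hfc h3 h2).const_mul_atTop hlam
  have hxc : Tendsto (fun x : ℝ => x) l (𝓝 c) := tendsto_id.mono_left nhdsWithin_le_nhds
  have hN : Tendsto (dampedNewtonFun lam f) l atBot := by
    have h5 : Tendsto (fun x => -(lam * (f x * (deriv f x)⁻¹))) l atBot :=
      tendsto_neg_atTop_atBot.comp h4
    have h6 : ∀ᶠ x in l, (fun x : ℝ => x) x ≤ c := by
      filter_upwards [self_mem_nhdsWithin] with x hx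
      exact le_of_lt hx
    have := tendsto_atBot_add_left_of_ge' l c h6 h5
    apply this.congr
    intro x
    simp [dampedNewtonFun, div_eq_mul_inv, sub_eq_add_neg]
  have h6 : Tendsto (fun x => f (dampedNewtonFun lam f x)) l atBot := hbot.comp hN
  have h7 : Tendsto (fun x => f x + f (dampedNewtonFun lam f x)) l atBot := by
    refine tendsto_atBot_add_left_of_ge' l (f c + 1) ?_ h6
    exact h3.eventually (eventually_le_nhds (lt_add_one (f c)))
  have h8 : Tendsto (fun x => (lam * (deriv f x)⁻¹) *
      (f x + f (dampedNewtonFun lam f x))) l atBot :=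
    Filter.Tendsto.atTop_mul_atBot₀ (h2.const_mul_atTop hlam) h7
  have h9 : Tendsto (fun x => x - (lam * (deriv f x)⁻¹) *
      (f x + f (dampedNewtonFun lam f x))) l atTop := by
    have h10 : Tendsto (fun x => -((lam * (deriv f x)⁻¹) *
        (f x + f (dampedNewtonFun lam f x)))) l atTop := tendsto_neg_atBot_atTop.comp h8
    have h11 : ∀ᶠ x in l, c - 1 ≤ (fun x : ℝ => x) x :=
      hxc.eventually (eventually_ge_nhds (by linarith))
    have := tendsto_atTop_add_left_of_le' l (c - 1) h11 h10
    apply this.congr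
    intro x
    ring
  apply h9.congr'
  filter_upwards [hev] with x hx
  exact (M_eq (ne_of_gt hx)).symm

/-- `M → -∞` to the right of a critical point on a negative hump. -/
lemma tendsto_M_atBot (hlam : 0 < lam) (hf : NewtonClass f)
    (htop : Tendsto f atTop atTop) {c : ℝ} (hfc : f c < 0) (hdc : deriv f c = 0)
    (hev : ∀ᶠ x in 𝓝[>] c, 0 < deriv f x) :
    Tendsto (dampedModNewtonFun lam f) (𝓝[>] c) atBot := by
  set l := 𝓝[>] c with hl
  have h1 : Tendsto (deriv f) l (𝓝 0) := by
    have := (hf.contf'.tendsto c).mono_left (nhdsWithin_le_nhds (s := Ioi c))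
    rwa [hdc] at this
  have h1' : Tendsto (deriv f) l (𝓝[>] 0) :=
    tendsto_nhdsWithin_iff.mpr ⟨h1, hev⟩
  have h2 : Tendsto (fun x => (deriv f x)⁻¹) l atTop := tendsto_inv_nhdsGT_zero.comp h1'
  have h3 : Tendsto f l (𝓝 (f c)) := (hf.contf.tendsto c).mono_left nhdsWithin_le_nhds
  have h4 : Tendsto (fun x => lam * (f x * (deriv f x)⁻¹)) l atBot := by
    have := Filter.Tendsto.neg_mul_atTop hfc h3 h2
    exact this.const_mul_atBot hlam
  have hxc : Tendsto (fun x : ℝ => x) l (𝓝 c) := tendsto_id.mono_left nhdsWithin_le_nhds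
  have hN : Tendsto (dampedNewtonFun lam f) l atTop := by
    have h5 : Tendsto (fun x => -(lam * (f x * (deriv f x)⁻¹))) l atTop :=
      tendsto_neg_atBot_atTop.comp h4
    have h6 : ∀ᶠ x in l, c - 1 ≤ (fun x : ℝ => x) x :=
      hxc.eventually (eventually_ge_nhds (by linarith))
    have := tendsto_atTop_add_left_of_le' l (c - 1) h6 h5
    apply this.congr
    intro x
    simp [dampedNewtonFun, div_eq_mul_inv, sub_eq_add_neg]
  have h6 : Tendsto (fun x => f (dampedNewtonFun lam f x)) l atTop := htop.comp hN
  have h7 : Tendsto (fun x => f x + f (dampedNewtonFun lam f x)) l atTop := by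
    refine tendsto_atTop_add_left_of_le' l (f c - 1) ?_ h6
    exact h3.eventually (eventually_ge_nhds (by linarith))
  have h8 : Tendsto (fun x => (lam * (deriv f x)⁻¹) *
      (f x + f (dampedNewtonFun lam f x))) l atTop :=
    Filter.Tendsto.atTop_mul_atTop₀ (h2.const_mul_atTop hlam) h7
  have h9 : Tendsto (fun x => x - (lam * (deriv f x)⁻¹) *
      (f x + f (dampedNewtonFun lam f x))) l atBot := by
    have h10 : Tendsto (fun x => -((lam * (deriv f x)⁻¹) *
        (f x + f (dampedNewtonFun lam f x)))) l atBot := tendsto_neg_atTop_atBot.comp h8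
    have h11 : ∀ᶠ x in l, (fun x : ℝ => x) x ≤ c + 1 :=
      hxc.eventually (eventually_le_nhds (lt_add_one c))
    have := tendsto_atBot_add_left_of_ge' l (c + 1) h11 h10
    apply this.congr
    intro x
    ring
  apply h9.congr'
  filter_upwards [hev] with x hx
  exact (M_eq (ne_of_gt hx)).symm

end Analytic

section Roots

variable {f : ℝ → ℝ}

lemma exists_right_rootfree (hf : NewtonClass f) {r R : ℝ} (hr : f r = 0) (hrR : r < R) :
    ∃ w, w ∈ Ioo r R ∧ ∀ x ∈ Ioc r w, f x ≠ 0 := by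
  have ev : ∀ᶠ x in 𝓝[>] r, f x ≠ 0 :=
    (eventually_ne_root hf hr).filter_mono (nhdsWithin_mono r (fun x hx => ne_of_gt hx))
  have ev2 : Iio R ∈ 𝓝[>] r := nhdsWithin_le_nhds (Iio_mem_nhds hrR)
  have hmem : {x | f x ≠ 0} ∩ Iio R ∈ 𝓝[>] r := inter_mem ev ev2
  rw [mem_nhdsGT_iff_exists_Ioc_subset] at hmem
  obtain ⟨u, hu, hsub⟩ := hmem
  have huR : u < R := (hsub ⟨hu, le_rfl⟩).2
  exact ⟨u, ⟨hu, huR⟩, fun x hx => (hsub hx).1⟩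

lemma exists_left_rootfree (hf : NewtonClass f) {L r : ℝ} (hr : f r = 0) (hLr : L < r) :
    ∃ w, w ∈ Ioo L r ∧ ∀ x ∈ Ico w r, f x ≠ 0 := by
  have ev : ∀ᶠ x in 𝓝[<] r, f x ≠ 0 :=
    (eventually_ne_root hf hr).filter_mono (nhdsWithin_mono r (fun x hx => ne_of_lt hx))
  have ev2 : Ioi L ∈ 𝓝[<] r := nhdsWithin_le_nhds (Ioi_mem_nhds hLr)
  have hmem : {x | f x ≠ 0} ∩ Ioi L ∈ 𝓝[<] r := inter_mem ev ev2
  rw [mem_nhdsLT_iff_exists_Ico_subset] at hmem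
  obtain ⟨u, hu, hsub⟩ := hmem
  have huL : L < u := (hsub ⟨le_rfl, hu⟩).2
  exact ⟨u, ⟨huL, hu⟩, fun x hx => (hsub hx).1⟩

lemma consecutive_roots (hf : NewtonClass f) {rL rR x₀ : ℝ}
    (h1 : rL < x₀) (h2 : x₀ < rR) (hL : f rL = 0) (hR : f rR = 0) (hx₀ : f x₀ ≠ 0) :
    ∃ p q, rL ≤ p ∧ p < x₀ ∧ x₀ < q ∧ q ≤ rR ∧ f p = 0 ∧ f q = 0 ∧
      ∀ x ∈ Ioo p q, f x ≠ 0 := by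
  have hroots_closed : IsClosed {x : ℝ | f x = 0} := isClosed_eq hf.contf continuous_const
  -- p
  have hSclosed : IsClosed (Icc rL x₀ ∩ {x | f x = 0}) := isClosed_Icc.inter hroots_closed
  have hSne : rL ∈ Icc rL x₀ ∩ {x | f x = 0} := ⟨⟨le_rfl, h1.le⟩, hL⟩
  have hSbdd : BddAbove (Icc rL x₀ ∩ {x | f x = 0}) :=
    (bddAbove_Icc (a := rL) (b := x₀)).mono (fun z hz => hz.1)
  set p := sSup (Icc rL x₀ ∩ {x | f x = 0}) with hp_def
  have hp_mem : p ∈ Icc rL x₀ ∩ {x | f x = 0} := hSclosed.csSup_mem ⟨rL, hSne⟩ hSbdd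
  have hfp : f p = 0 := hp_mem.2
  have hpx₀ : p < x₀ := lt_of_le_of_ne hp_mem.1.2 (fun h => hx₀ (h ▸ hfp))
  -- q
  have hTclosed : IsClosed (Icc x₀ rR ∩ {x | f x = 0}) := isClosed_Icc.inter hroots_closed
  have hTne : rR ∈ Icc x₀ rR ∩ {x | f x = 0} := ⟨⟨h2.le, le_rfl⟩, hR⟩
  have hTbdd : BddBelow (Icc x₀ rR ∩ {x | f x = 0}) :=
    (bddBelow_Icc (a := rR) (b := x₀)).mono (fun z hz => hz.1)
  set q := sInf (Icc x₀ rR ∩ {x | f x = 0}) with hq_def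
  have hq_mem : q ∈ Icc x₀ rR ∩ {x | f x = 0} := hTclosed.csInf_mem ⟨rR, hTne⟩ hTbdd
  have hfq : f q = 0 := hq_mem.2
  have hx₀q : x₀ < q := lt_of_le_of_ne hq_mem.1.1 (fun h => hx₀ (by rw [h]; exact hfq))
  refine ⟨p, q, hp_mem.1.1, hpx₀, hx₀q, hq_mem.1.2, hfp, hfq, ?_⟩
  intro x hx hfx
  rcases le_or_gt x x₀ with hle | hlt
  · have : x ≤ p := le_csSup hSbdd ⟨⟨hp_mem.1.1.trans hx.1.le, hle⟩, hfx⟩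
    exact absurd this (not_le.mpr hx.1)
  · have : q ≤ x := csInf_le hTbdd ⟨⟨hlt.le, hx.2.le.trans hq_mem.1.2⟩, hfx⟩
    exact absurd this (not_le.mpr hx.2)

lemma sign_const (hf : NewtonClass f) {p q : ℝ} (hpq : p < q)
    (hne : ∀ x ∈ Ioo p q, f x ≠ 0) :
    (∀ x ∈ Ioo p q, 0 < f x) ∨ (∀ x ∈ Ioo p q, f x < 0) := by
  set m := (p + q) / 2 with hm_def
  have hm : m ∈ Ioo p q := ⟨by simp only [hm_def]; linarith, by simp only [hm_def]; linarith⟩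
  have key : ∀ x ∈ Ioo p q, ∀ y ∈ Ioo p q, 0 < f x → f y < 0 → False := by
    intro x hx y hy hfx hfy
    have hsub : uIcc x y ⊆ Ioo p q := by
      rw [uIcc_eq_union]
      apply Set.union_subset
      · exact fun z hz => ⟨lt_of_lt_of_le hx.1 hz.1, lt_of_le_of_lt hz.2 hy.2⟩
      · exact fun z hz => ⟨lt_of_lt_of_le hy.1 hz.1, lt_of_le_of_lt hz.2 hx.2⟩
    have h0 : (0:ℝ) ∈ uIcc (f x) (f y) := by
      rw [Set.mem_uIcc]; right; exact ⟨hfy.le, hfx.le⟩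
    obtain ⟨z, hz, hz0⟩ := intermediate_value_uIcc (hf.contf.continuousOn (s := uIcc x y)) h0
    exact hne z (hsub hz) hz0
  rcases (hne m hm).lt_or_gt with hneg | hpos
  · right
    intro x hx
    by_contra h
    push_neg at h
    exact key x hx m hm (lt_of_le_of_ne h (fun h' => hne x hx h'.symm)) hneg
  · left
    intro x hx
    by_contra h
    push_neg at h
    exact key m hm x hx hpos (lt_of_le_of_ne h (hne x hx))

lemma not_both_pos (hf : NewtonClass f) {p q q' : ℝ} (hpq : p < q) (hqq' : q < q')
    (hq : f q = 0) (h1 : ∀ x ∈ Ioo p q, 0 < f x) (h2 : ∀ x ∈ Ioo q q', 0 < f x) :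
    False := by
  have hmin : IsLocalMin f q := by
    have hmem : Ioo p q' ∈ 𝓝 q := Ioo_mem_nhds hpq hqq'
    rw [IsLocalMin, IsMinFilter]
    filter_upwards [hmem] with x hx
    rcases lt_trichotomy x q with h | h | h
    · exact hq ▸ (h1 x ⟨hx.1, h⟩).le
    · exact h ▸ le_rfl
    · exact hq ▸ (h2 x ⟨h, hx.2⟩).le
  exact hf.2.1 q hq hmin.deriv_eq_zero

lemma not_both_neg (hf : NewtonClass f) {p q q' : ℝ} (hpq : p < q) (hqq' : q < q')
    (hq : f q = 0) (h1 : ∀ x ∈ Ioo p q, f x < 0) (h2 : ∀ x ∈ Ioo q q', f x < 0) :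
    False := by
  have hmax : IsLocalMax f q := by
    have hmem : Ioo p q' ∈ 𝓝 q := Ioo_mem_nhds hpq hqq'
    rw [IsLocalMax, IsMaxFilter]
    filter_upwards [hmem] with x hx
    rcases lt_trichotomy x q with h | h | h
    · exact hq ▸ (h1 x ⟨hx.1, h⟩).le
    · exact h ▸ le_rfl
    · exact hq ▸ (h2 x ⟨h, hx.2⟩).le
  exact hf.2.1 q hq hmax.deriv_eq_zero

/-- Find three roots `a < b < d` with `f > 0` on `(a,b)` and `f < 0` on `(b,d)`. -/
lemma exists_pos_neg_triple (hf : NewtonClass f)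
    {r₁ r₂ r₃ r₄ : ℝ} (h12 : r₁ < r₂) (h23 : r₂ < r₃) (h34 : r₃ < r₄)
    (hr1 : f r₁ = 0) (hr2 : f r₂ = 0) (hr3 : f r₃ = 0) (hr4 : f r₄ = 0) :
    ∃ a b d : ℝ, a < b ∧ b < d ∧ f a = 0 ∧ f b = 0 ∧ f d = 0 ∧
      (∀ x ∈ Ioo a b, 0 < f x) ∧ (∀ x ∈ Ioo b d, f x < 0) := by
  obtain ⟨w, hw, hwfree⟩ := exists_right_rootfree hf hr2 h23
  have hfw : f w ≠ 0 := hwfree w ⟨hw.1, le_rfl⟩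
  obtain ⟨p, q, hrLp, hpw, hwq, hqrR, hfp, hfq, hnoroot⟩ :=
    consecutive_roots hf hw.1 hw.2 hr2 hr3 hfw
  have hpq : p < q := hpw.trans hwq
  rcases sign_const hf hpq hnoroot with hpos | hneg
  · -- f > 0 on (p,q); find the next root to the right of q
    have hq4 : q < r₄ := lt_of_le_of_lt hqrR h34
    obtain ⟨w', hw', hwfree'⟩ := exists_right_rootfree hf hfq hq4
    have hfw' : f w' ≠ 0 := hwfree' w' ⟨hw'.1, le_rfl⟩
    obtain ⟨p2, q', hqp2, hp2w', hw'q', hq'r4, hfp2, hfq', hnoroot'⟩ :=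
      consecutive_roots hf hw'.1 hw'.2 hfq hr4 hfw'
    have hp2q : p2 = q := by
      by_contra h
      exact hwfree' p2 ⟨lt_of_le_of_ne hqp2 (Ne.symm h), hp2w'.le⟩ hfp2
    subst hp2q
    have hqq' : p2 < q' := hp2w'.trans hw'q'
    rcases sign_const hf hqq' hnoroot' with hpos' | hneg'
    · exact absurd (not_both_pos hf hpq hqq' hfq hpos hpos') (fun h => h)
    · exact ⟨p, p2, q', hpq, hqq', hfp, hfq, hfq', hpos, hneg'⟩
  · -- f < 0 on (p,q); find the previous root to the left of p
    have h1p : r₁ < p := lt_of_lt_of_le h12 hrLp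
    obtain ⟨w'', hw'', hwfree''⟩ := exists_left_rootfree hf hfp h1p
    have hfw'' : f w'' ≠ 0 := hwfree'' w'' ⟨le_rfl, hw''.2⟩
    obtain ⟨p', p2, hr1p', hp'w'', hw''p2, hp2p, hfp', hfp2, hnoroot''⟩ :=
      consecutive_roots hf hw''.1 hw''.2 hr1 hfp hfw''
    have hp2p' : p2 = p := by
      by_contra h
      exact hwfree'' p2 ⟨hw''p2.le, lt_of_le_of_ne hp2p h⟩ hfp2
    subst hp2p'
    have hp'p : p' < p2 := hp'w''.trans hw''p2
    rcases sign_const hf hp'p hnoroot'' with hpos'' | hneg'' 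
    · exact ⟨p', p2, q, hp'p, hpq, hfp', hfp, hfq, hpos'', hneg⟩
    · exact absurd (not_both_neg hf hp'p hpq hfp hneg'' hneg) (fun h => h)

end Roots

section Main

variable {f : ℝ → ℝ}

lemma exists_crit_left (hf : NewtonClass f) {a b : ℝ} (hab : a < b) (heq : f a = f b)
    (hfa' : 0 < deriv f a) (hfb' : deriv f b ≠ 0) :
    ∃ c, a < c ∧ c < b ∧ deriv f c = 0 ∧ ∀ x ∈ Ico a c, 0 < deriv f x := by
  have hclosed : IsClosed (Icc a b ∩ {x | deriv f x = 0}) :=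
    isClosed_Icc.inter (isClosed_eq hf.contf' continuous_const)
  obtain ⟨c0, hc0, h0⟩ := exists_deriv_eq_zero hab (hf.contf.continuousOn) heq
  have hne : c0 ∈ Icc a b ∩ {x | deriv f x = 0} := ⟨⟨hc0.1.le, hc0.2.le⟩, h0⟩
  have hbdd : BddBelow (Icc a b ∩ {x | deriv f x = 0}) :=
    (bddBelow_Icc (a := b) (b := a)).mono (fun z hz => hz.1)
  set c := sInf (Icc a b ∩ {x | deriv f x = 0}) with hc_def
  have hc_mem : c ∈ Icc a b ∩ {x | deriv f x = 0} := hclosed.csInf_mem ⟨c0, hne⟩ hbdd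
  have hc0' : deriv f c = 0 := hc_mem.2
  have hac : a < c := lt_of_le_of_ne hc_mem.1.1 (fun h => hfa'.ne' (h ▸ hc0'))
  have hcb : c < b := lt_of_le_of_ne hc_mem.1.2 (fun h => hfb' (h ▸ hc0'))
  refine ⟨c, hac, hcb, hc0', ?_⟩
  intro x hx
  have hxne : deriv f x ≠ 0 := by
    intro h
    have : c ≤ x := csInf_le hbdd ⟨⟨hx.1, hx.2.le.trans hcb.le⟩, h⟩
    exact absurd this (not_le.mpr hx.2)
  by_contra h
  push_neg at h
  have hlt : deriv f x < 0 := lt_of_le_of_ne h hxne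
  have h0mem : (0:ℝ) ∈ Icc (deriv f x) (deriv f a) := ⟨hlt.le, hfa'.le⟩
  obtain ⟨z, hz, hz0⟩ := intermediate_value_Icc' hx.1 (hf.contf'.continuousOn) h0mem
  have : c ≤ z := csInf_le hbdd ⟨⟨hz.1, (hz.2.trans hx.2.le).trans hcb.le⟩, hz0⟩
  exact absurd ((this.trans hz.2).trans_lt hx.2) (lt_irrefl c)

lemma exists_crit_right (hf : NewtonClass f) {b d : ℝ} (hbd : b < d) (heq : f b = f d)
    (hfd' : 0 < deriv f d) (hfb' : deriv f b ≠ 0) :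
    ∃ c, b < c ∧ c < d ∧ deriv f c = 0 ∧ ∀ x ∈ Ioc c d, 0 < deriv f x := by
  have hclosed : IsClosed (Icc b d ∩ {x | deriv f x = 0}) :=
    isClosed_Icc.inter (isClosed_eq hf.contf' continuous_const)
  obtain ⟨c0, hc0, h0⟩ := exists_deriv_eq_zero hbd (hf.contf.continuousOn) heq
  have hne : c0 ∈ Icc b d ∩ {x | deriv f x = 0} := ⟨⟨hc0.1.le, hc0.2.le⟩, h0⟩
  have hbdd : BddAbove (Icc b d ∩ {x | deriv f x = 0}) :=
    (bddAbove_Icc (a := b) (b := d)).mono (fun z hz => hz.1)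
  set c := sSup (Icc b d ∩ {x | deriv f x = 0}) with hc_def
  have hc_mem : c ∈ Icc b d ∩ {x | deriv f x = 0} := hclosed.csSup_mem ⟨c0, hne⟩ hbdd
  have hc0' : deriv f c = 0 := hc_mem.2
  have hbc : b < c := lt_of_le_of_ne hc_mem.1.1 (fun h => hfb' (by rw [h]; exact hc0'))
  have hcd : c < d := lt_of_le_of_ne hc_mem.1.2 (fun h => hfd'.ne' (h ▸ hc0'))
  refine ⟨c, hbc, hcd, hc0', ?_⟩
  intro x hx
  have hxne : deriv f x ≠ 0 := by
    intro h
    have : x ≤ c := le_csSup hbdd ⟨⟨hbc.le.trans hx.1.le, hx.2⟩, h⟩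
    exact absurd this (not_le.mpr hx.1)
  by_contra h
  push_neg at h
  have hlt : deriv f x < 0 := lt_of_le_of_ne h hxne
  have h0mem : (0:ℝ) ∈ Icc (deriv f x) (deriv f d) := ⟨hlt.le, hfd'.le⟩
  obtain ⟨z, hz, hz0⟩ := intermediate_value_Icc hx.2 (hf.contf'.continuousOn) h0mem
  have : z ≤ c := le_csSup hbdd ⟨⟨(hbc.le.trans hx.1.le).trans hz.1, hz.2⟩, hz0⟩
  exact absurd (hx.1.trans_le (hz.1.trans this)) (lt_irrefl c)

lemma main_case1 (lam : ℝ) (hlam : 0 < lam) (f : ℝ → ℝ) (hf : NewtonClass f)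
    (htop : Filter.Tendsto f Filter.atTop Filter.atTop)
    (hbot : Filter.Tendsto f Filter.atBot Filter.atBot)
    (hroots : ∃ r₁ r₂ r₃ r₄ : ℝ, r₁ < r₂ ∧ r₂ < r₃ ∧ r₃ < r₄ ∧
      f r₁ = 0 ∧ f r₂ = 0 ∧ f r₃ = 0 ∧ f r₄ = 0) :
    ∀ n : ℕ, 1 ≤ n → ∃ a : ℝ, (dampedModNewtonFun lam f)^[n] a = a ∧
      ∀ m : ℕ, 1 ≤ m → m < n → (dampedModNewtonFun lam f)^[m] a ≠ a := by
  obtain ⟨r₁, r₂, r₃, r₄, h12, h23, h34, hr1, hr2, hr3, hr4⟩ := hroots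
  intro n hn
  rcases eq_or_lt_of_le hn with hn1 | hn2
  · -- n = 1 : a root is a fixed point
    refine ⟨r₁, ?_, ?_⟩
    · rw [← hn1, Function.iterate_one]
      exact M_fixed_of_root hr1
    · intro m hm1 hm2
      omega
  · -- n ≥ 2 : horseshoe
    obtain ⟨a, b, d, hab, hbd, hfa, hfb, hfd, hpos, hneg⟩ :=
      exists_pos_neg_triple hf h12 h23 h34 hr1 hr2 hr3 hr4
    have hfa' : 0 < deriv f a := deriv_pos_of_pos_right hf hab hfa hpos
    have hfd' : 0 < deriv f d := deriv_pos_of_neg_left hf hbd hfd hneg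
    have hfb' : deriv f b ≠ 0 := hf.2.1 b hfb
    obtain ⟨cp, hacp, hcpb, hcp0, hderivL⟩ :=
      exists_crit_left hf hab (hfa.trans hfb.symm) hfa' hfb'
    obtain ⟨cm, hbcm, hcmd, hcm0, hderivR⟩ :=
      exists_crit_right hf hbd (hfb.trans hfd.symm) hfd' hfb'
    have hfcp : 0 < f cp := hpos cp ⟨hacp, hcpb⟩
    have hfcm : f cm < 0 := hneg cm ⟨hbcm, hcmd⟩
    -- limits of M
    have hevL : ∀ᶠ x in nhdsWithin cp (Iio cp), 0 < deriv f x := by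
      filter_upwards [Ioo_mem_nhdsLT_of_mem (⟨hacp, le_rfl⟩ : cp ∈ Ioc a cp)] with x hx
      exact hderivL x ⟨hx.1.le, hx.2⟩
    have hevR : ∀ᶠ x in nhdsWithin cm (Ioi cm), 0 < deriv f x := by
      filter_upwards [Ioo_mem_nhdsGT_of_mem (⟨le_rfl, hcmd⟩ : cm ∈ Ico cm d)] with x hx
      exact hderivR x ⟨hx.1, hx.2.le⟩
    have hMtop := tendsto_M_atTop hlam hf hbot hfcp hcp0 hevL
    have hMbot := tendsto_M_atBot hlam hf htop hfcm hcm0 hevR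
    -- choose u and v
    obtain ⟨u, hMu, huIoo⟩ := ((hMtop.eventually_ge_atTop d).and
      (Ioo_mem_nhdsLT_of_mem (⟨hacp, le_rfl⟩ : cp ∈ Ioc a cp))).exists
    obtain ⟨v, hMv, hvIoo⟩ := ((hMbot.eventually_le_atBot a).and
      (Ioo_mem_nhdsGT_of_mem (⟨le_rfl, hcmd⟩ : cm ∈ Ico cm d))).exists
    have hau : a ≤ u := huIoo.1.le
    have huv : u < v := huIoo.2.trans (hcpb.trans (hbcm.trans hvIoo.1))
    have hvd : v ≤ d := hvIoo.2.le
    -- continuity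
    have hcontA : ContinuousOn (dampedModNewtonFun lam f) (Icc a u) := by
      apply M_contOn hf
      intro x hx
      exact (hderivL x ⟨hx.1, lt_of_le_of_lt hx.2 huIoo.2⟩).ne'
    have hcontB : ContinuousOn (dampedModNewtonFun lam f) (Icc v d) := by
      apply M_contOn hf
      intro x hx
      exact (hderivR x ⟨lt_of_lt_of_le hvIoo.1 hx.1, hx.2⟩).ne'
    -- covering
    have hMa : dampedModNewtonFun lam f a = a := M_fixed_of_root hfa
    have hMd : dampedModNewtonFun lam f d = d := M_fixed_of_root hfd
    have hsurjA : Icc a d ⊆ dampedModNewtonFun lam f '' Icc a u := by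
      have h1 := intermediate_value_Icc hau hcontA
      rw [hMa] at h1
      exact (Icc_subset_Icc le_rfl hMu).trans h1
    have hsurjB : Icc a d ⊆ dampedModNewtonFun lam f '' Icc v d := by
      have h1 := intermediate_value_Icc hvd hcontB
      rw [hMd] at h1
      exact (Icc_subset_Icc hMv le_rfl).trans h1
    exact horseshoe_periodic (dampedModNewtonFun lam f) hau huv hvd
      hcontA hcontB hsurjA hsurjB n hn2

end Main

lemma neg_newtonClass {f : ℝ → ℝ} (hf : NewtonClass f) : NewtonClass (fun x => -f x) := by
  have hderiv : deriv (fun x => -f x) = fun x => -deriv f x := funext (fun x => deriv.neg)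
  refine ⟨hf.1.neg, ?_, ?_⟩
  · intro x hx
    rw [hderiv]
    simp only [ne_eq, neg_eq_zero]
    exact hf.2.1 x (by simpa using hx)
  · intro x hx
    rw [hderiv] at hx ⊢
    have : deriv (fun x => -deriv f x) = fun x => -deriv (deriv f) x :=
      funext (fun x => deriv.neg)
    rw [this]
    simp only [ne_eq, neg_eq_zero]
    exact hf.2.2 x (by simpa using hx)

lemma neg_dampedModNewtonFun (lam : ℝ) (f : ℝ → ℝ) :
    dampedModNewtonFun lam (fun x => -f x) = dampedModNewtonFun lam f := by
  have hderiv : deriv (fun x => -f x) = fun x => -deriv f x := funext (fun x => deriv.neg)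
  have hN : dampedNewtonFun lam (fun x => -f x) = dampedNewtonFun lam f := by
    funext x
    rw [dampedNewtonFun, dampedNewtonFun, hderiv]
    rw [neg_div_neg_eq]
  funext x
  rw [dampedModNewtonFun, dampedModNewtonFun, hN, hderiv]
  rw [neg_div_neg_eq]


/-- For any damping parameter `λ > 0`, if `f` is a Newton-class function with
infinite limits of opposite signs at `±∞` and at least four real roots, then
`M_{λ,f}` has periodic points of every prime period. -/
theorem dampedModNewtonFun_periodic_points_of_every_prime_period
    (lam : ℝ) (hlam : 0 < lam)
    (f : ℝ → ℝ)
    (hf : NewtonClass f)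
    (hlim : (Filter.Tendsto f Filter.atTop Filter.atTop ∧
              Filter.Tendsto f Filter.atBot Filter.atBot) ∨
            (Filter.Tendsto f Filter.atTop Filter.atBot ∧
              Filter.Tendsto f Filter.atBot Filter.atTop))
    (hroots : ∃ r₁ r₂ r₃ r₄ : ℝ, r₁ < r₂ ∧ r₂ < r₃ ∧ r₃ < r₄ ∧
      f r₁ = 0 ∧ f r₂ = 0 ∧ f r₃ = 0 ∧ f r₄ = 0) :
    ∀ n : ℕ, 1 ≤ n → ∃ a : ℝ, (dampedModNewtonFun lam f)^[n] a = a ∧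
      ∀ m : ℕ, 1 ≤ m → m < n → (dampedModNewtonFun lam f)^[m] a ≠ a := by
  rcases hlim with ⟨htop, hbot⟩ | ⟨htb, hbt⟩
  · exact main_case1 lam hlam f hf htop hbot hroots
  · set g : ℝ → ℝ := fun x => -f x with hg
    have hNg : NewtonClass g := neg_newtonClass hf
    have htopg : Filter.Tendsto g Filter.atTop Filter.atTop :=
      tendsto_neg_atBot_atTop.comp htb
    have hbotg : Filter.Tendsto g Filter.atBot Filter.atBot :=
      tendsto_neg_atTop_atBot.comp hbt
    obtain ⟨r₁, r₂, r₃, r₄, h12, h23, h34, hr1, hr2, hr3, hr4⟩ := hroots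
    have hrootsg : ∃ r₁ r₂ r₃ r₄ : ℝ, r₁ < r₂ ∧ r₂ < r₃ ∧ r₃ < r₄ ∧
        g r₁ = 0 ∧ g r₂ = 0 ∧ g r₃ = 0 ∧ g r₄ = 0 :=
      ⟨r₁, r₂, r₃, r₄, h12, h23, h34, by simp [hg, hr1], by simp [hg, hr2],
        by simp [hg, hr3], by simp [hg, hr4]⟩
    have := main_case1 lam hlam g hNg htopg hbotg hrootsg
    rwa [hg, neg_dampedModNewtonFun lam f] at this
end

section
/- Let λ > 0 be a real damping parameter and let f : ℝ → ℝ satisfy: (i) f belongs to the Newton class; (ii) the limits of f at +∞ and −∞ are infinite and of opposite signs; (iii) f has at least four real roots. Then the set of all real numbers a for which the iteration sequence (M_{λ,f}ⁿ(a))_{n∈ℕ} does not converge (to any real limit) is uncountable. -/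
open Set Filter Topology

section Aux

variable {f : ℝ → ℝ} {lam : ℝ}

lemma N_root (lam : ℝ) {x : ℝ} (hx : f x = 0) : dampedNewtonFun lam f x = x := by
  simp [dampedNewtonFun, hx]

lemma M_root (lam : ℝ) {x : ℝ} (hx : f x = 0) : dampedModNewtonFun lam f x = x := by
  simp [dampedModNewtonFun, N_root lam hx, hx]

lemma M_of_N_root {x : ℝ} (h : f (dampedNewtonFun lam f x) = 0) :
    dampedModNewtonFun lam f x = dampedNewtonFun lam f x := by
  simp [dampedModNewtonFun, h]

lemma contOn_N (hc : Continuous f) (hc' : Continuous (deriv f)) {s : Set ℝ}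
    (h : ∀ x ∈ s, deriv f x ≠ 0) : ContinuousOn (dampedNewtonFun lam f) s := by
  apply ContinuousOn.sub continuousOn_id
  exact continuousOn_const.mul ((hc.continuousOn).div (hc'.continuousOn) h)

lemma contOn_M (hc : Continuous f) (hc' : Continuous (deriv f)) {s : Set ℝ}
    (h : ∀ x ∈ s, deriv f x ≠ 0) : ContinuousOn (dampedModNewtonFun lam f) s := by
  have hN : ContinuousOn (dampedNewtonFun lam f) s := contOn_N hc hc' h
  apply hN.sub
  apply continuousOn_const.mul
  exact ((hc.comp_continuousOn hN)).div (hc'.continuousOn) h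

/-- On a right piece `[ρ, c)` with positive derivative at the root `ρ`,
both `f` and `f'` are positive. -/
lemma right_aux (hc : Continuous f) (hc' : Continuous (deriv f))
    {ρ c : ℝ} (hρc : ρ < c) (hfρ : f ρ = 0)
    (hne : ∀ y ∈ Ico ρ c, deriv f y ≠ 0) (hpos : 0 < deriv f ρ) :
    ∀ x ∈ Ioo ρ c, 0 < f x ∧ 0 < deriv f x := by
  have hposall : ∀ y ∈ Ico ρ c, 0 < deriv f y := by
    intro y hy
    rcases (hne y hy).lt_or_gt with hneg | hp
    · exfalso
      have h0 : (0:ℝ) ∈ uIcc (deriv f ρ) (deriv f y) := by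
        rw [mem_uIcc]; exact Or.inr ⟨hneg.le, hpos.le⟩
      obtain ⟨w, hw, hw0⟩ := intermediate_value_uIcc (hc'.continuousOn) h0
      rw [uIcc_of_le hy.1] at hw
      exact hne w ⟨hw.1, lt_of_le_of_lt hw.2 hy.2⟩ hw0
    · exact hp
  intro x hx
  have hmono : StrictMonoOn f (Icc ρ x) := by
    apply strictMonoOn_of_deriv_pos (convex_Icc _ _) hc.continuousOn
    intro y hy
    rw [interior_Icc] at hy
    exact hposall y ⟨hy.1.le, lt_of_lt_of_le hy.2 hx.2.le⟩
  have : f ρ < f x := hmono ⟨le_rfl, hx.1.le⟩ ⟨hx.1.le, le_rfl⟩ hx.1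
  exact ⟨by linarith [hfρ ▸ this], hposall x ⟨hx.1.le, hx.2⟩⟩

lemma ratio_pos_right (hc : Continuous f) (hc' : Continuous (deriv f))
    {ρ c : ℝ} (hρc : ρ < c) (hfρ : f ρ = 0)
    (hne : ∀ y ∈ Ico ρ c, deriv f y ≠ 0) :
    ∀ x ∈ Ioo ρ c, 0 < f x / deriv f x := by
  have hd : deriv (fun y => -f y) = fun y => -deriv f y := funext fun y => deriv.neg
  rcases (hne ρ ⟨le_rfl, hρc⟩).lt_or_gt with hneg | hpos
  · intro x hx
    have h := right_aux (f := fun y => -f y) hc.neg (by rw [hd]; exact hc'.neg) hρc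
      (by simp [hfρ]) (by rw [hd]; intro y hy; simpa using hne y hy)
      (by rw [hd]; simpa using hneg) x hx
    rw [hd] at h
    have : f x / deriv f x = (-f x) / (-deriv f x) := (neg_div_neg_eq _ _).symm
    rw [this]
    exact div_pos h.1 h.2
  · intro x hx
    have h := right_aux hc hc' hρc hfρ hne hpos x hx
    exact div_pos h.1 h.2

/-- On a left piece `(c, ρ]`. -/
lemma left_aux (hc : Continuous f) (hc' : Continuous (deriv f))
    {c ρ : ℝ} (hcρ : c < ρ) (hfρ : f ρ = 0)
    (hne : ∀ y ∈ Ioc c ρ, deriv f y ≠ 0) (hpos : 0 < deriv f ρ) :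
    ∀ x ∈ Ioo c ρ, f x < 0 ∧ 0 < deriv f x := by
  have hposall : ∀ y ∈ Ioc c ρ, 0 < deriv f y := by
    intro y hy
    rcases (hne y hy).lt_or_gt with hneg | hp
    · exfalso
      have h0 : (0:ℝ) ∈ uIcc (deriv f y) (deriv f ρ) := by
        rw [mem_uIcc]; exact Or.inl ⟨hneg.le, hpos.le⟩
      obtain ⟨w, hw, hw0⟩ := intermediate_value_uIcc (hc'.continuousOn) h0
      rw [uIcc_of_le hy.2] at hw
      exact hne w ⟨lt_of_lt_of_le hy.1 hw.1, hw.2⟩ hw0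
    · exact hp
  intro x hx
  have hmono : StrictMonoOn f (Icc x ρ) := by
    apply strictMonoOn_of_deriv_pos (convex_Icc _ _) hc.continuousOn
    intro y hy
    rw [interior_Icc] at hy
    exact hposall y ⟨lt_trans hx.1 hy.1, hy.2.le⟩
  have : f x < f ρ := hmono ⟨le_rfl, hx.2.le⟩ ⟨hx.2.le, le_rfl⟩ hx.2
  exact ⟨by linarith [hfρ ▸ this], hposall x ⟨hx.1, hx.2.le⟩⟩

lemma ratio_neg_left (hc : Continuous f) (hc' : Continuous (deriv f))
    {c ρ : ℝ} (hcρ : c < ρ) (hfρ : f ρ = 0)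
    (hne : ∀ y ∈ Ioc c ρ, deriv f y ≠ 0) :
    ∀ x ∈ Ioo c ρ, f x / deriv f x < 0 := by
  have hd : deriv (fun y => -f y) = fun y => -deriv f y := funext fun y => deriv.neg
  rcases (hne ρ ⟨hcρ, le_rfl⟩).lt_or_gt with hneg | hpos
  · intro x hx
    have h := left_aux (f := fun y => -f y) hc.neg (by rw [hd]; exact hc'.neg) hcρ
      (by simp [hfρ]) (by rw [hd]; intro y hy; simpa using hne y hy)
      (by rw [hd]; simpa using hneg) x hx
    rw [hd] at h
    have : f x / deriv f x = (-f x) / (-deriv f x) := (neg_div_neg_eq _ _).symm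
    rw [this]
    exact div_neg_of_neg_of_pos h.1 h.2
  · intro x hx
    have h := left_aux hc hc' hcρ hfρ hne hpos x hx
    exact div_neg_of_neg_of_pos h.1 h.2

end Aux

section Aux2

variable {f : ℝ → ℝ} {lam : ℝ}

lemma abs_ratio_atTop (hc : Continuous f) (hc' : Continuous (deriv f))
    {c : ℝ} (l : Filter ℝ) (hl : l ≤ 𝓝 c) (hfc : f c ≠ 0) (hdc : deriv f c = 0)
    (hev : ∀ᶠ x in l, deriv f x ≠ 0) :
    Tendsto (fun x => |f x| * (|deriv f x|)⁻¹) l atTop := by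
  apply Filter.Tendsto.pos_mul_atTop (abs_pos.mpr hfc)
  · exact ((hc.abs.tendsto c).mono_left hl)
  · apply Filter.Tendsto.inv_tendsto_nhdsGT_zero
    rw [tendsto_nhdsWithin_iff]
    constructor
    · have h1 : Tendsto (fun x => |deriv f x|) (𝓝 c) (𝓝 |deriv f c|) := (hc'.abs.tendsto c)
      rw [hdc, abs_zero] at h1
      exact h1.mono_left hl
    · filter_upwards [hev] with x hx
      exact mem_Ioi.mpr (abs_pos.mpr hx)

lemma tendsto_N_right_atBot (hlam : 0 < lam) (hc : Continuous f) (hc' : Continuous (deriv f))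
    {ρ c : ℝ} (hρc : ρ < c) (hfρ : f ρ = 0) (hfc : f c ≠ 0) (hdc : deriv f c = 0)
    (hne : ∀ y ∈ Ico ρ c, deriv f y ≠ 0) :
    Tendsto (dampedNewtonFun lam f) (𝓝[<] c) atBot := by
  have hIoo : ∀ᶠ x in 𝓝[<] c, x ∈ Ioo ρ c :=
    Filter.eventually_of_mem (Ioo_mem_nhdsLT hρc) (fun x hx => hx)
  have habs : Tendsto (fun x => |f x| * (|deriv f x|)⁻¹) (𝓝[<] c) atTop :=
    abs_ratio_atTop hc hc' _ nhdsWithin_le_nhds hfc hdc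
      (by filter_upwards [hIoo] with x hx; exact hne x ⟨hx.1.le, hx.2⟩)
  have hratio : Tendsto (fun x => f x / deriv f x) (𝓝[<] c) atTop := by
    apply habs.congr'
    filter_upwards [hIoo] with x hx
    have hpos := ratio_pos_right hc hc' hρc hfρ hne x hx
    rw [← div_eq_mul_inv, ← abs_div, abs_of_pos hpos]
  have hmul : Tendsto (fun x => lam * (f x / deriv f x)) (𝓝[<] c) atTop :=
    hratio.const_mul_atTop hlam
  have hid : Tendsto (fun x : ℝ => x) (𝓝[<] c) (𝓝 c) :=
    (continuous_id.tendsto c).mono_left nhdsWithin_le_nhds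
  have := hid.add_atBot (tendsto_neg_atTop_atBot.comp hmul)
  show Tendsto (fun x => x - lam * (f x / deriv f x)) _ _
  simpa [dampedNewtonFun, sub_eq_add_neg, Function.comp] using this

lemma tendsto_N_left_atTop (hlam : 0 < lam) (hc : Continuous f) (hc' : Continuous (deriv f))
    {c ρ : ℝ} (hcρ : c < ρ) (hfρ : f ρ = 0) (hfc : f c ≠ 0) (hdc : deriv f c = 0)
    (hne : ∀ y ∈ Ioc c ρ, deriv f y ≠ 0) :
    Tendsto (dampedNewtonFun lam f) (𝓝[>] c) atTop := by
  have hIoo : ∀ᶠ x in 𝓝[>] c, x ∈ Ioo c ρ :=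
    Filter.eventually_of_mem (Ioo_mem_nhdsGT hcρ) (fun x hx => hx)
  have habs : Tendsto (fun x => |f x| * (|deriv f x|)⁻¹) (𝓝[>] c) atTop :=
    abs_ratio_atTop hc hc' _ nhdsWithin_le_nhds hfc hdc
      (by filter_upwards [hIoo] with x hx; exact hne x ⟨hx.1, hx.2.le⟩)
  have hratio : Tendsto (fun x => -(f x / deriv f x)) (𝓝[>] c) atTop := by
    apply habs.congr'
    filter_upwards [hIoo] with x hx
    have hneg := ratio_neg_left hc hc' hcρ hfρ hne x hx
    rw [← div_eq_mul_inv, ← abs_div, abs_of_neg hneg]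
  have hmul : Tendsto (fun x => lam * -(f x / deriv f x)) (𝓝[>] c) atTop :=
    hratio.const_mul_atTop hlam
  have hid : Tendsto (fun x : ℝ => x) (𝓝[>] c) (𝓝 c) :=
    (continuous_id.tendsto c).mono_left nhdsWithin_le_nhds
  have := hid.add_atTop hmul
  apply this.congr
  intro x
  simp [dampedNewtonFun, sub_eq_add_neg, mul_neg]

lemma exists_anchor_right (hlam : 0 < lam) (hc : Continuous f) (hc' : Continuous (deriv f))
    {ρ c τ : ℝ} (hρc : ρ < c) (hfρ : f ρ = 0) (hfc : f c ≠ 0) (hdc : deriv f c = 0)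
    (hne : ∀ y ∈ Ico ρ c, deriv f y ≠ 0) (hτ : τ < ρ) :
    ∃ x₀ ∈ Ioo ρ c, dampedNewtonFun lam f x₀ = τ := by
  have hN := tendsto_N_right_atBot hlam hc hc' hρc hfρ hfc hdc hne
  have hIoo : ∀ᶠ x in 𝓝[<] c, x ∈ Ioo ρ c :=
    Filter.eventually_of_mem (Ioo_mem_nhdsLT hρc) (fun x hx => hx)
  obtain ⟨z, hz, hzτ⟩ := (hIoo.and (hN.eventually (eventually_lt_atBot τ))).exists
  have hNcont : ContinuousOn (dampedNewtonFun lam f) (Icc ρ z) :=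
    contOn_N hc hc' (fun x hx => hne x ⟨hx.1, lt_of_le_of_lt hx.2 hz.2⟩)
  have hmem : τ ∈ Icc (dampedNewtonFun lam f z) (dampedNewtonFun lam f ρ) := by
    rw [N_root lam hfρ]
    exact ⟨hzτ.le, hτ.le⟩
  obtain ⟨x₀, hx₀, hNx₀⟩ := intermediate_value_Icc' hz.1.le hNcont hmem
  refine ⟨x₀, ⟨lt_of_le_of_ne hx₀.1 ?_, lt_of_le_of_lt hx₀.2 hz.2⟩, hNx₀⟩
  rintro rfl
  rw [N_root lam hfρ] at hNx₀
  exact absurd hNx₀ (ne_of_gt hτ)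

lemma exists_anchor_left (hlam : 0 < lam) (hc : Continuous f) (hc' : Continuous (deriv f))
    {c ρ τ : ℝ} (hcρ : c < ρ) (hfρ : f ρ = 0) (hfc : f c ≠ 0) (hdc : deriv f c = 0)
    (hne : ∀ y ∈ Ioc c ρ, deriv f y ≠ 0) (hτ : ρ < τ) :
    ∃ x₁ ∈ Ioo c ρ, dampedNewtonFun lam f x₁ = τ := by
  have hN := tendsto_N_left_atTop hlam hc hc' hcρ hfρ hfc hdc hne
  have hIoo : ∀ᶠ x in 𝓝[>] c, x ∈ Ioo c ρ :=
    Filter.eventually_of_mem (Ioo_mem_nhdsGT hcρ) (fun x hx => hx)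
  obtain ⟨z, hz, hzτ⟩ := (hIoo.and (hN.eventually (eventually_gt_atTop τ))).exists
  have hNcont : ContinuousOn (dampedNewtonFun lam f) (Icc z ρ) :=
    contOn_N hc hc' (fun x hx => hne x ⟨lt_of_lt_of_le hz.1 hx.1, hx.2⟩)
  have hmem : τ ∈ Icc (dampedNewtonFun lam f ρ) (dampedNewtonFun lam f z) := by
    rw [N_root lam hfρ]
    exact ⟨hτ.le, hzτ.le⟩
  obtain ⟨x₁, hx₁, hNx₁⟩ := intermediate_value_Icc' hz.2.le hNcont hmem
  refine ⟨x₁, ⟨lt_of_lt_of_le hz.1 hx₁.1, lt_of_le_of_ne hx₁.2 ?_⟩, hNx₁⟩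
  rintro rfl
  rw [N_root lam hfρ] at hNx₁
  exact absurd hNx₁ (ne_of_lt hτ)

lemma exists_first_zero (hc : Continuous f) (hc' : Continuous (deriv f))
    {a b : ℝ} (hab : a < b) (hfa : f a = 0) (hfb : f b = 0) (hda : deriv f a ≠ 0) :
    ∃ c, a < c ∧ c < b ∧ deriv f c = 0 ∧ ∀ y ∈ Ico a c, deriv f y ≠ 0 := by
  obtain ⟨w, hw, hw0⟩ := exists_deriv_eq_zero hab hc.continuousOn (hfa.trans hfb.symm)
  set S : Set ℝ := Icc a w ∩ {x | deriv f x = 0} with hSdef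
  have hSne : S.Nonempty := ⟨w, ⟨hw.1.le, le_rfl⟩, hw0⟩
  have hScl : IsClosed S := isClosed_Icc.inter (isClosed_eq hc' continuous_const)
  have hbdd : BddBelow S := ⟨a, fun x hx => hx.1.1⟩
  have hcS : sInf S ∈ S := hScl.csInf_mem hSne hbdd
  have hac : a < sInf S := lt_of_le_of_ne hcS.1.1 (fun h => hda (by rw [h]; exact hcS.2))
  refine ⟨sInf S, hac, lt_of_le_of_lt hcS.1.2 hw.2, hcS.2, ?_⟩
  intro y hy hy0
  have hyS : y ∈ S := ⟨⟨hy.1, hy.2.le.trans hcS.1.2⟩, hy0⟩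
  exact absurd (csInf_le hbdd hyS) (not_le.mpr hy.2)

lemma exists_last_zero (hc : Continuous f) (hc' : Continuous (deriv f))
    {a b : ℝ} (hab : a < b) (hfa : f a = 0) (hfb : f b = 0) (hdb : deriv f b ≠ 0) :
    ∃ c, a < c ∧ c < b ∧ deriv f c = 0 ∧ ∀ y ∈ Ioc c b, deriv f y ≠ 0 := by
  obtain ⟨w, hw, hw0⟩ := exists_deriv_eq_zero hab hc.continuousOn (hfa.trans hfb.symm)
  set S : Set ℝ := Icc w b ∩ {x | deriv f x = 0} with hSdef
  have hSne : S.Nonempty := ⟨w, ⟨le_rfl, hw.2.le⟩, hw0⟩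
  have hScl : IsClosed S := isClosed_Icc.inter (isClosed_eq hc' continuous_const)
  have hbdd : BddAbove S := ⟨b, fun x hx => hx.1.2⟩
  have hcS : sSup S ∈ S := hScl.csSup_mem hSne hbdd
  have hcb : sSup S < b := lt_of_le_of_ne hcS.1.2 (by rintro h; exact hdb (h ▸ hcS.2))
  refine ⟨sSup S, lt_of_lt_of_le hw.1 hcS.1.1, hcb, hcS.2, ?_⟩
  intro y hy hy0
  have hyS : y ∈ S := ⟨⟨hcS.1.1.trans hy.1.le, hy.2⟩, hy0⟩
  exact absurd (le_csSup hbdd hyS) (not_le.mpr hy.1)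
end Aux2

section Symbolic

lemma itinerary_exists (M : ℝ → ℝ) (J : ℕ → Set ℝ)
    (hcpt : ∀ n, IsCompact (J n)) (hne : ∀ n, (J n).Nonempty)
    (hcont : ∀ n, ContinuousOn M (J n)) (hcov : ∀ n, J (n + 1) ⊆ M '' J n) :
    ∃ a, ∀ n, M^[n] a ∈ J n := by
  -- finite prefixes are realizable
  have hpre : ∀ (N : ℕ) (J : ℕ → Set ℝ), (∀ n, J (n + 1) ⊆ M '' J n) →
      (∀ n, (J n).Nonempty) → ∃ a, ∀ k ≤ N, M^[k] a ∈ J k := by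
    intro N
    induction N with
    | zero =>
      intro J _ hne
      obtain ⟨a, ha⟩ := hne 0
      exact ⟨a, fun k hk => by rw [Nat.le_zero.mp hk]; simpa using ha⟩
    | succ N ih =>
      intro J hcov hne
      obtain ⟨b, hb⟩ := ih (fun n => J (n + 1)) (fun n => hcov (n + 1)) (fun n => hne (n + 1))
      have hb0 : b ∈ J 1 := by simpa using hb 0 (Nat.zero_le _)
      obtain ⟨a, ha, hab⟩ := hcov 0 hb0
      refine ⟨a, ?_⟩
      rintro (_ | k) hk
      · simpa using ha
      · rw [Function.iterate_succ_apply, hab]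
        exact hb k (Nat.succ_le_succ_iff.mp hk)
  -- the compact prefix sets
  set S : ℕ → Set ℝ := fun N => {a | ∀ k ≤ N, M^[k] a ∈ J k} with hSdef
  have hS0 : S 0 = J 0 := by
    ext a
    constructor
    · intro h; simpa using h 0 le_rfl
    · intro h k hk; rw [Nat.le_zero.mp hk]; simpa using h
  have hkey : ∀ N, IsCompact (S N) ∧ ContinuousOn (M^[N]) (S N) := by
    intro N
    induction N with
    | zero =>
      rw [hS0]
      exact ⟨hcpt 0, by simpa using continuousOn_id⟩
    | succ N ih =>
      obtain ⟨hcS, hcontS⟩ := ih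
      have hmaps : Set.MapsTo (M^[N]) (S N) (J N) := fun a ha => ha N le_rfl
      have hcont_next : ContinuousOn (M^[N + 1]) (S N) := by
        rw [Function.iterate_succ']
        exact (hcont N).comp hcontS hmaps
      have hSsucc : S (N + 1) = S N ∩ (M^[N + 1]) ⁻¹' (J (N + 1)) := by
        ext a
        constructor
        · intro h
          exact ⟨fun k hk => h k (hk.trans (Nat.le_succ _)), h (N + 1) le_rfl⟩
        · rintro ⟨h1, h2⟩ k hk
          rcases Nat.lt_or_ge k (N + 1) with h | h
          · exact h1 k (Nat.lt_succ_iff.mp h)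
          · have : k = N + 1 := le_antisymm hk h
            rw [this]; exact h2
      have hclosed : IsClosed (S (N + 1)) := by
        rw [hSsucc]
        exact hcont_next.preimage_isClosed_of_isClosed hcS.isClosed (hcpt (N + 1)).isClosed
      have hsub : S (N + 1) ⊆ S N := fun a ha k hk => ha k (hk.trans (Nat.le_succ _))
      refine ⟨hcS.of_isClosed_subset hclosed hsub, ?_⟩
      rw [Function.iterate_succ']
      exact (hcont N).comp (hcontS.mono hsub) (fun a ha => hmaps (hsub ha))
  have hSne : ∀ N, (S N).Nonempty := by
    intro N
    obtain ⟨a, ha⟩ := hpre N J hcov hne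
    exact ⟨a, ha⟩
  have hdec : ∀ N, S (N + 1) ⊆ S N := fun N a ha k hk => ha k (hk.trans (Nat.le_succ _))
  have hiInter : (⋂ N, S N).Nonempty := by
    apply IsCompact.nonempty_iInter_of_sequence_nonempty_isCompact_isClosed S hdec hSne
      (hkey 0).1 (fun N => (hkey N).1.isClosed)
  obtain ⟨a, ha⟩ := hiInter
  rw [Set.mem_iInter] at ha
  exact ⟨a, fun n => ha n n le_rfl⟩

open Classical in
lemma not_countable_bool_seq : ¬ Countable (ℕ → Bool) := by
  intro h
  obtain ⟨g, hg⟩ := Countable.exists_injective_nat (ℕ → Bool)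
  have hg2 : Function.Injective (fun s : Set ℕ => g (fun n => decide (n ∈ s))) := by
    intro s t hst
    have h1 := hg hst
    ext n
    have h2 := congrFun h1 n
    simp only [decide_eq_decide] at h2
    exact h2
  exact Function.cantor_injective _ hg2

end Symbolic

/-- For any damping parameter `λ > 0`, if `f` is a Newton-class function with
infinite limits of opposite signs at `±∞` and at least four real roots, then
the set of points whose iteration sequence under `M_{λ,f}` does not converge
is uncountable. -/
theorem dampedModNewtonFun_uncountable_divergence
    (lam : ℝ) (hlam : 0 < lam)
    (f : ℝ → ℝ)
    (hf : NewtonClass f)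
    (hlim : (Filter.Tendsto f Filter.atTop Filter.atTop ∧
              Filter.Tendsto f Filter.atBot Filter.atBot) ∨
            (Filter.Tendsto f Filter.atTop Filter.atBot ∧
              Filter.Tendsto f Filter.atBot Filter.atTop))
    (hroots : ∃ r₁ r₂ r₃ r₄ : ℝ, r₁ < r₂ ∧ r₂ < r₃ ∧ r₃ < r₄ ∧
      f r₁ = 0 ∧ f r₂ = 0 ∧ f r₃ = 0 ∧ f r₄ = 0) :
    ¬ Set.Countable
      {a : ℝ | ¬ ∃ L : ℝ,
        Filter.Tendsto (fun n => (dampedModNewtonFun lam f)^[n] a)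
          Filter.atTop (nhds L)} := by
  clear hlim
  obtain ⟨r₁, r₂, r₃, r₄, h12, h23, h34, hf1, hf2, hf3, hf4⟩ := hroots
  obtain ⟨hC2, nf2, -⟩ := hf
  have hcf : Continuous f := hC2.continuous
  have hcf' : Continuous (deriv f) := hC2.continuous_deriv (by norm_num)
  set M := dampedModNewtonFun lam f with hM
  have hd2 : deriv f r₂ ≠ 0 := nf2 r₂ hf2
  have hd3 : deriv f r₃ ≠ 0 := nf2 r₃ hf3
  obtain ⟨c₂, hc₂l, hc₂r, hdc₂, hne₂⟩ := exists_first_zero hcf hcf' h23 hf2 hf3 hd2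
  obtain ⟨c₂', hc₂'l, hc₂'r, hdc₂', hne₂'⟩ := exists_last_zero hcf hcf' h12 hf1 hf2 hd2
  obtain ⟨c₃, hc₃l, hc₃r, hdc₃, hne₃⟩ := exists_first_zero hcf hcf' h34 hf3 hf4 hd3
  have hfc₂ : f c₂ ≠ 0 := fun h => nf2 c₂ h hdc₂
  have hfc₂' : f c₂' ≠ 0 := fun h => nf2 c₂' h hdc₂'
  have hfc₃ : f c₃ ≠ 0 := fun h => nf2 c₃ h hdc₃
  obtain ⟨x₀, hx₀, hNx₀⟩ :=
    exists_anchor_right hlam hcf hcf' hc₂l hf2 hfc₂ hdc₂ hne₂ h12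
  obtain ⟨x₃, hx₃, hNx₃⟩ :=
    exists_anchor_right hlam hcf hcf' hc₃l hf3 hfc₃ hdc₃ hne₃ (h12.trans h23)
  obtain ⟨x₁, hx₁, hNx₁⟩ :=
    exists_anchor_left hlam hcf hcf' hc₂'r hf2 hfc₂' hdc₂' hne₂' (h23.trans h34)
  have hMx₀ : M x₀ = r₁ := by
    rw [hM, M_of_N_root (by rw [hNx₀]; exact hf1), hNx₀]
  have hMx₃ : M x₃ = r₁ := by
    rw [hM, M_of_N_root (by rw [hNx₃]; exact hf1), hNx₃]
  have hMx₁ : M x₁ = r₄ := by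
    rw [hM, M_of_N_root (by rw [hNx₁]; exact hf4), hNx₁]
  have hMr₂ : M r₂ = r₂ := M_root lam hf2
  have hMr₃ : M r₃ = r₃ := M_root lam hf3
  -- the three intervals
  set K : Set ℝ := Icc x₁ r₂ with hKdef
  set I0 : Set ℝ := Icc r₂ x₀ with hI0def
  set I1 : Set ℝ := Icc r₃ x₃ with hI1def
  have hneK : ∀ x ∈ K, deriv f x ≠ 0 :=
    fun x hx => hne₂' x ⟨lt_of_lt_of_le hx₁.1 hx.1, hx.2⟩
  have hneI0 : ∀ x ∈ I0, deriv f x ≠ 0 :=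
    fun x hx => hne₂ x ⟨hx.1, lt_of_le_of_lt hx.2 hx₀.2⟩
  have hneI1 : ∀ x ∈ I1, deriv f x ≠ 0 :=
    fun x hx => hne₃ x ⟨hx.1, lt_of_le_of_lt hx.2 hx₃.2⟩
  have hcontK : ContinuousOn M K := contOn_M hcf hcf' hneK
  have hcontI0 : ContinuousOn M I0 := contOn_M hcf hcf' hneI0
  have hcontI1 : ContinuousOn M I1 := contOn_M hcf hcf' hneI1
  have hKcov : Icc r₂ r₄ ⊆ M '' K := by
    have := intermediate_value_Icc' hx₁.2.le hcontK
    rwa [hMr₂, hMx₁] at this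
  have hI0cov : Icc r₁ r₂ ⊆ M '' I0 := by
    have := intermediate_value_Icc' hx₀.1.le hcontI0
    rwa [hMr₂, hMx₀] at this
  have hI1cov : Icc r₁ r₃ ⊆ M '' I1 := by
    have := intermediate_value_Icc' hx₃.1.le hcontI1
    rwa [hMr₃, hMx₃] at this
  have hx₀r₃ : x₀ < r₃ := hx₀.2.trans hc₂r
  have hx₃r₄ : x₃ < r₄ := hx₃.2.trans hc₃r
  have hx₁r₁ : r₁ < x₁ := hc₂'l.trans hx₁.1
  -- bool-indexed intervals
  set Ib : Bool → Set ℝ := fun b => bif b then I1 else I0 with hIbdef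
  have hIbK : ∀ b, Ib b ⊆ Icc r₂ r₄ := by
    intro b x hx
    cases b <;> simp only [hIbdef, Bool.cond_true, Bool.cond_false] at hx
    · exact ⟨hx.1, hx.2.trans (hx₀.2.trans (hc₂r.trans h34)).le⟩
    · exact ⟨(h23.le).trans hx.1, hx.2.trans hx₃r₄.le⟩
  have hKIb : ∀ b, K ⊆ M '' Ib b := by
    intro b x hx
    cases b <;> simp only [hIbdef, Bool.cond_true, Bool.cond_false]
    · exact hI0cov ⟨hx₁r₁.le.trans hx.1, hx.2⟩
    · exact hI1cov ⟨hx₁r₁.le.trans hx.1, hx.2.trans h23.le⟩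
  have hIbcpt : ∀ b, IsCompact (Ib b) := by
    intro b; cases b <;> simp only [hIbdef, Bool.cond_true, Bool.cond_false] <;>
      exact isCompact_Icc
  have hIbne : ∀ b, (Ib b).Nonempty := by
    intro b
    cases b <;> simp only [hIbdef, Bool.cond_true, Bool.cond_false]
    · exact nonempty_Icc.mpr hx₀.1.le
    · exact nonempty_Icc.mpr hx₃.1.le
  have hIbcont : ∀ b, ContinuousOn M (Ib b) := by
    intro b; cases b <;> simp only [hIbdef, Bool.cond_true, Bool.cond_false] <;>
      assumption
  have hIbdisj : ∀ y, y ∈ Ib true → y ∈ Ib false → False := by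
    intro y h1 h0
    simp only [hIbdef, Bool.cond_true, Bool.cond_false] at h1 h0
    have := h1.1
    have := h0.2
    linarith
  -- the itinerary sequences
  set J : (ℕ → Bool) → ℕ → Set ℝ := fun t n =>
    if n % 2 = 0 then K
    else if (n / 2) % 2 = 0 then Ib (t (n / 4))
    else Ib (decide ((n / 4) % 2 = 0)) with hJdef
  have hJK : ∀ t n, n % 2 = 0 → J t n = K := by
    intro t n h; simp only [hJdef]; rw [if_pos h]
  have hJodd : ∀ t n, n % 2 = 1 → ∃ b, J t n = Ib b := by
    intro t n h
    simp only [hJdef]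
    rw [if_neg (by omega)]
    by_cases h2 : (n / 2) % 2 = 0
    · exact ⟨t (n / 4), by rw [if_pos h2]⟩
    · exact ⟨decide ((n / 4) % 2 = 0), by rw [if_neg h2]⟩
  have hpos1 : ∀ t i, J t (4 * i + 1) = Ib (t i) := by
    intro t i
    simp only [hJdef]
    rw [if_neg (by omega), if_pos (by omega)]
    have h4 : (4 * i + 1) / 4 = i := by omega
    rw [h4]
  have hpos3 : ∀ t j, J t (4 * j + 3) = Ib (decide (j % 2 = 0)) := by
    intro t j
    simp only [hJdef]
    rw [if_neg (by omega), if_neg (by omega)]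
    have h4 : (4 * j + 3) / 4 = j := by omega
    rw [h4]
  -- itineraries exist
  have hex : ∀ t : ℕ → Bool, ∃ a, ∀ n, M^[n] a ∈ J t n := by
    intro t
    apply itinerary_exists
    · intro n
      rcases Nat.even_or_odd n with he | ho
      · rw [hJK t n (Nat.even_iff.mp he)]; exact isCompact_Icc
      · obtain ⟨b, hb⟩ := hJodd t n (Nat.odd_iff.mp ho)
        rw [hb]; exact hIbcpt b
    · intro n
      rcases Nat.even_or_odd n with he | ho
      · rw [hJK t n (Nat.even_iff.mp he)]; exact nonempty_Icc.mpr hx₁.2.le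
      · obtain ⟨b, hb⟩ := hJodd t n (Nat.odd_iff.mp ho)
        rw [hb]; exact hIbne b
    · intro n
      rcases Nat.even_or_odd n with he | ho
      · rw [hJK t n (Nat.even_iff.mp he)]; exact hcontK
      · obtain ⟨b, hb⟩ := hJodd t n (Nat.odd_iff.mp ho)
        rw [hb]; exact hIbcont b
    · intro n
      rcases Nat.even_or_odd n with he | ho
      · have h1 := Nat.even_iff.mp he
        obtain ⟨b, hb⟩ := hJodd t (n + 1) (by omega)
        rw [hb, hJK t n h1]
        exact (hIbK b).trans hKcov
      · have h1 := Nat.odd_iff.mp ho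
        obtain ⟨b, hb⟩ := hJodd t n h1
        rw [hb, hJK t (n + 1) (by omega)]
        exact hKIb b
  choose Φ hΦ using hex
  -- every itinerary point diverges
  have hdiv : ∀ t : ℕ → Bool,
      ¬ ∃ L : ℝ, Filter.Tendsto (fun n => M^[n] (Φ t)) Filter.atTop (nhds L) := by
    rintro t ⟨L, hL⟩
    have hmem : ∀ b : Bool, L ∈ Ib b := by
      intro b
      have hmono : Tendsto (fun j : ℕ => 4 * (2 * j + bif b then 0 else 1) + 3) atTop atTop := by
        apply tendsto_atTop_atTop.mpr
        intro c
        exact ⟨c, fun a hab => by cases b <;>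
          simp only [Bool.cond_false, Bool.cond_true] <;> omega⟩
      have hsub : Tendsto (fun j : ℕ => M^[4 * (2 * j + bif b then 0 else 1) + 3] (Φ t))
          atTop (𝓝 L) := hL.comp hmono
      have hclosed : IsClosed (Ib b) := (hIbcpt b).isClosed
      apply hclosed.mem_of_tendsto hsub
      filter_upwards with j
      have h1 := hΦ t (4 * (2 * j + bif b then 0 else 1) + 3)
      rw [hpos3 t (2 * j + bif b then 0 else 1)] at h1
      cases b
      · have hdec : decide ((2 * j + bif false then 0 else 1) % 2 = 0) = false := by
          simp only [Bool.cond_false, decide_eq_false_iff_not]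
          omega
        rw [hdec] at h1
        simpa using h1
      · have hdec : decide ((2 * j + bif true then 0 else 1) % 2 = 0) = true := by
          simp only [Bool.cond_true, decide_eq_true_eq]
          omega
        rw [hdec] at h1
        simpa using h1
    exact hIbdisj L (hmem true) (hmem false)
  -- injectivity
  have hinj : Function.Injective Φ := by
    intro t t' h
    by_contra hne
    obtain ⟨i, hi⟩ := Function.ne_iff.mp hne
    have h1 : M^[4 * i + 1] (Φ t) ∈ Ib (t i) := by
      have := hΦ t (4 * i + 1); rwa [hpos1 t i] at this
    have h2 : M^[4 * i + 1] (Φ t) ∈ Ib (t' i) := by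
      have := hΦ t' (4 * i + 1); rw [hpos1 t' i] at this; rwa [h]
    cases hb : t i <;> cases hb' : t' i
    · rw [hb] at hi; rw [hb'] at hi; exact hi rfl
    · rw [hb] at h1; rw [hb'] at h2; exact hIbdisj _ h2 h1
    · rw [hb] at h1; rw [hb'] at h2; exact hIbdisj _ h1 h2
    · rw [hb] at hi; rw [hb'] at hi; exact hi rfl
  -- conclude
  intro hcnt
  have huniv : (Set.univ : Set (ℕ → Bool)).Countable := by
    apply Set.Countable.mono _ (hcnt.preimage hinj)
    intro t _
    exact hdiv t
  exact not_countable_bool_seq (Set.countable_univ_iff.mp huniv)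
end

section
/- Let λ > 0 be a real damping parameter, let f be a function in the Newton class, and let c₁ < c₂ be two consecutive roots of f′ (i.e. f′(c₁) = f′(c₂) = 0 and f′(x) ≠ 0 for x ∈ (c₁, c₂)) such that f has exactly one root in the open interval (c₁, c₂). Then the one-sided limits of N_{λ,f} at c₁ from the right and at c₂ from the left are infinite and of opposite signs: either lim_{x→c₁+} N_{λ,f}(x) = +∞ and lim_{x→c₂−} N_{λ,f}(x) = −∞, or lim_{x→c₁+} N_{λ,f}(x) = −∞ and lim_{x→c₂−} N_{λ,f}(x) = +∞. -/
open Filter Set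

private lemma quot_atBot' {g d : ℝ → ℝ} {l : Filter ℝ} {C : ℝ} (hC : C < 0)
    (hg : Tendsto g l (nhds C)) (hd : Tendsto d l (nhdsWithin 0 (Ioi 0))) :
    Tendsto (fun x => g x / d x) l atBot := by
  have hinv : Tendsto (fun x => (d x)⁻¹) l atTop := tendsto_inv_nhdsGT_zero.comp hd
  simpa [div_eq_mul_inv] using hg.neg_mul_atTop hC hinv

private lemma quot_atTop' {g d : ℝ → ℝ} {l : Filter ℝ} {C : ℝ} (hC : 0 < C)
    (hg : Tendsto g l (nhds C)) (hd : Tendsto d l (nhdsWithin 0 (Ioi 0))) :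
    Tendsto (fun x => g x / d x) l atTop := by
  have hinv : Tendsto (fun x => (d x)⁻¹) l atTop := tendsto_inv_nhdsGT_zero.comp hd
  simpa [div_eq_mul_inv] using hg.pos_mul_atTop hC hinv

private lemma newton_atTop' {lam : ℝ} (hlam : 0 < lam) {f : ℝ → ℝ} {c : ℝ} {l : Filter ℝ}
    (hl : l ≤ nhds c)
    (hq : Tendsto (fun x => f x / deriv f x) l atBot) :
    Tendsto (dampedNewtonFun lam f) l atTop := by
  have h1 : Tendsto (fun x => lam * (f x / deriv f x)) l atBot := hq.const_mul_atBot hlam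
  have h2 : Tendsto (fun x => -(lam * (f x / deriv f x))) l atTop :=
    tendsto_neg_atBot_atTop.comp h1
  have hid : Tendsto (fun x : ℝ => x) l (nhds c) := tendsto_id.mono_right hl
  exact (by simpa [sub_eq_add_neg] using hid.add_atTop h2 :
    Tendsto (fun x => x - lam * (f x / deriv f x)) l atTop)

private lemma newton_atBot' {lam : ℝ} (hlam : 0 < lam) {f : ℝ → ℝ} {c : ℝ} {l : Filter ℝ}
    (hl : l ≤ nhds c)
    (hq : Tendsto (fun x => f x / deriv f x) l atTop) :
    Tendsto (dampedNewtonFun lam f) l atBot := by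
  have h1 : Tendsto (fun x => lam * (f x / deriv f x)) l atTop := hq.const_mul_atTop hlam
  have h2 : Tendsto (fun x => -(lam * (f x / deriv f x))) l atBot :=
    tendsto_neg_atTop_atBot.comp h1
  have hid : Tendsto (fun x : ℝ => x) l (nhds c) := tendsto_id.mono_right hl
  exact (by simpa [sub_eq_add_neg] using hid.add_atBot h2 :
    Tendsto (fun x => x - lam * (f x / deriv f x)) l atBot)

/-- For any damping parameter `λ > 0` and Newton-class function `f`, if
`c₁ < c₂` are consecutive roots of `f'` with exactly one root of `f` in
`(c₁, c₂)`, then the one-sided limits of `N_{λ,f}` at `c₁+` and `c₂−` are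
infinite with opposite signs. -/
theorem dampedNewtonFun_onesided_limits_infinite
    (lam : ℝ) (hlam : 0 < lam)
    (f : ℝ → ℝ) (hf : NewtonClass f)
    (c₁ c₂ : ℝ) (hlt : c₁ < c₂)
    (hc₁ : deriv f c₁ = 0) (hc₂ : deriv f c₂ = 0)
    (hconsec : ∀ x ∈ Set.Ioo c₁ c₂, deriv f x ≠ 0)
    (hroot : ∃! r, r ∈ Set.Ioo c₁ c₂ ∧ f r = 0) :
    (Filter.Tendsto (dampedNewtonFun lam f) (nhdsWithin c₁ (Set.Ioi c₁)) Filter.atTop ∧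
       Filter.Tendsto (dampedNewtonFun lam f) (nhdsWithin c₂ (Set.Iio c₂)) Filter.atBot) ∨
    (Filter.Tendsto (dampedNewtonFun lam f) (nhdsWithin c₁ (Set.Ioi c₁)) Filter.atBot ∧
       Filter.Tendsto (dampedNewtonFun lam f) (nhdsWithin c₂ (Set.Iio c₂)) Filter.atTop) := by
  obtain ⟨hC2, hsimple, -⟩ := hf
  have hfc : Continuous f := hC2.continuous
  have hdc : Continuous (deriv f) := hC2.continuous_deriv (by norm_num)
  obtain ⟨r, ⟨hrmem, hfr⟩, -⟩ := hroot
  -- sign dichotomy for deriv f on (c₁, c₂)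
  have hsign : (∀ x ∈ Ioo c₁ c₂, 0 < deriv f x) ∨ (∀ x ∈ Ioo c₁ c₂, deriv f x < 0) := by
    by_contra h
    push_neg at h
    obtain ⟨⟨x, hx, hx0⟩, ⟨y, hy, hy0⟩⟩ := h
    have hx0' : deriv f x < 0 := lt_of_le_of_ne hx0 (hconsec x hx)
    have hy0' : 0 < deriv f y := lt_of_le_of_ne hy0 (Ne.symm (hconsec y hy))
    have h0 : (0 : ℝ) ∈ uIcc (deriv f x) (deriv f y) := by
      rw [Set.mem_uIcc]; left; exact ⟨hx0'.le, hy0'.le⟩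
    obtain ⟨z, hz, hz0⟩ := intermediate_value_uIcc hdc.continuousOn h0
    exact hconsec z (Set.ordConnected_Ioo.uIcc_subset hx hy hz) hz0
  -- filter facts
  have hl₁ : nhdsWithin c₁ (Ioi c₁) ≤ nhds c₁ := nhdsWithin_le_nhds
  have hl₂ : nhdsWithin c₂ (Iio c₂) ≤ nhds c₂ := nhdsWithin_le_nhds
  have hmem₁ : Ioo c₁ c₂ ∈ nhdsWithin c₁ (Ioi c₁) := Ioo_mem_nhdsGT_of_mem ⟨le_refl _, hlt⟩
  have hmem₂ : Ioo c₁ c₂ ∈ nhdsWithin c₂ (Iio c₂) := Ioo_mem_nhdsLT_of_mem ⟨hlt, le_refl _⟩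
  have hf₁ : Tendsto f (nhdsWithin c₁ (Ioi c₁)) (nhds (f c₁)) :=
    (hfc.tendsto c₁).mono_left hl₁
  have hf₂ : Tendsto f (nhdsWithin c₂ (Iio c₂)) (nhds (f c₂)) :=
    (hfc.tendsto c₂).mono_left hl₂
  have hd₁0 : Tendsto (deriv f) (nhdsWithin c₁ (Ioi c₁)) (nhds 0) := by
    have := (hdc.tendsto c₁).mono_left hl₁
    rwa [hc₁] at this
  have hd₂0 : Tendsto (deriv f) (nhdsWithin c₂ (Iio c₂)) (nhds 0) := by
    have := (hdc.tendsto c₂).mono_left hl₂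
    rwa [hc₂] at this
  have hmemIcc : ∀ {x : ℝ}, x ∈ Ioo c₁ c₂ → x ∈ Icc c₁ c₂ := fun hx => ⟨hx.1.le, hx.2.le⟩
  have hc₁Icc : c₁ ∈ Icc c₁ c₂ := left_mem_Icc.mpr hlt.le
  have hc₂Icc : c₂ ∈ Icc c₁ c₂ := right_mem_Icc.mpr hlt.le
  left
  rcases hsign with hpos | hneg
  · -- f strictly increasing on [c₁, c₂]
    have hmono : StrictMonoOn f (Icc c₁ c₂) :=
      strictMonoOn_of_deriv_pos (convex_Icc _ _) hfc.continuousOn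
        (by rw [interior_Icc]; exact hpos)
    have hfc₁lt : f c₁ < 0 := by
      have := hmono hc₁Icc (hmemIcc hrmem) hrmem.1
      rwa [hfr] at this
    have hfc₂gt : 0 < f c₂ := by
      have := hmono (hmemIcc hrmem) hc₂Icc hrmem.2
      rwa [hfr] at this
    have hd₁ : Tendsto (deriv f) (nhdsWithin c₁ (Ioi c₁)) (nhdsWithin 0 (Ioi 0)) :=
      tendsto_nhdsWithin_iff.mpr ⟨hd₁0, eventually_of_mem hmem₁ fun x hx => hpos x hx⟩
    have hd₂ : Tendsto (deriv f) (nhdsWithin c₂ (Iio c₂)) (nhdsWithin 0 (Ioi 0)) :=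
      tendsto_nhdsWithin_iff.mpr ⟨hd₂0, eventually_of_mem hmem₂ fun x hx => hpos x hx⟩
    exact ⟨newton_atTop' hlam hl₁ (quot_atBot' hfc₁lt hf₁ hd₁),
           newton_atBot' hlam hl₂ (quot_atTop' hfc₂gt hf₂ hd₂)⟩
  · -- f strictly decreasing on [c₁, c₂]
    have hmono : StrictAntiOn f (Icc c₁ c₂) :=
      strictAntiOn_of_deriv_neg (convex_Icc _ _) hfc.continuousOn
        (by rw [interior_Icc]; exact hneg)
    have hfc₁gt : 0 < f c₁ := by
      have := hmono hc₁Icc (hmemIcc hrmem) hrmem.1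
      rwa [hfr] at this
    have hfc₂lt : f c₂ < 0 := by
      have := hmono (hmemIcc hrmem) hc₂Icc hrmem.2
      rwa [hfr] at this
    -- rewrite quotient as (-f)/(-f')
    have hkey : (fun x => f x / deriv f x) = fun x => (-f x) / (-deriv f x) := by
      funext x; rw [neg_div_neg_eq]
    have hnf₁ : Tendsto (fun x => -f x) (nhdsWithin c₁ (Ioi c₁)) (nhds (-f c₁)) := hf₁.neg
    have hnf₂ : Tendsto (fun x => -f x) (nhdsWithin c₂ (Iio c₂)) (nhds (-f c₂)) := hf₂.neg
    have hnd₁ : Tendsto (fun x => -deriv f x) (nhdsWithin c₁ (Ioi c₁))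
        (nhdsWithin 0 (Ioi 0)) := by
      refine tendsto_nhdsWithin_iff.mpr ⟨by simpa using hd₁0.neg,
        eventually_of_mem hmem₁ fun x hx => ?_⟩
      simpa using hneg x hx
    have hnd₂ : Tendsto (fun x => -deriv f x) (nhdsWithin c₂ (Iio c₂))
        (nhdsWithin 0 (Ioi 0)) := by
      refine tendsto_nhdsWithin_iff.mpr ⟨by simpa using hd₂0.neg,
        eventually_of_mem hmem₂ fun x hx => ?_⟩
      simpa using hneg x hx
    have hq₁ : Tendsto (fun x => f x / deriv f x) (nhdsWithin c₁ (Ioi c₁)) atBot := by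
      rw [hkey]; exact quot_atBot' (by linarith) hnf₁ hnd₁
    have hq₂ : Tendsto (fun x => f x / deriv f x) (nhdsWithin c₂ (Iio c₂)) atTop := by
      rw [hkey]; exact quot_atTop' (by linarith) hnf₂ hnd₂
    exact ⟨newton_atTop' hlam hl₁ hq₁, newton_atBot' hlam hl₂ hq₂⟩
end
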